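/- arXiv:2209.11010 — 5 statements merged into one kernel-verified Lean document; each statement's English description precedes it below -/
import Mathlib

section
/- In any single change covering design SCCD(v,k,b) with 2 ≤ k ≤ v, the number of blocks satisfies b ≥ (C(v,2) − C(k,2))/(k−1) + 1, where C(n,2) = n(n−1)/2. -/
/-- A single change covering design `SCCD(v,k,b)`: a ground set `X` of size `v`
together with blocks `B 0, …, B (b-1)`, each a `k`-subset of `X`, such that
consecutive blocks share exactly `k-1` elements and every pair of distinct
elements of `X` occurs together in some block. -/
structure SCCD (v k b : ℕ) where
  X : Finset ℕ
  B : ℕ → Finset ℕ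
  cardX : X.card = v
  cardB : ∀ i, i < b → (B i).card = k
  subX : ∀ i, i < b → B i ⊆ X
  singleChange : ∀ i, i + 1 < b → (B i ∩ B (i + 1)).card = k - 1
  covers : ∀ x ∈ X, ∀ y ∈ X, x ≠ y → ∃ i, i < b ∧ x ∈ B i ∧ y ∈ B i

/-- A circular single change covering design: additionally the last and first
blocks share exactly `k-1` elements. -/
structure CSCCD (v k b : ℕ) extends SCCD v k b where
  circ : 0 < b → (toSCCD.B (b - 1) ∩ toSCCD.B 0).card = k - 1

/-- `g₁(v,k) = (C(v,2) − C(k,2))/(k−1) + 1`, the linear lower bound. -/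
def g1 (v k : ℕ) : ℚ := ((v.choose 2 : ℚ) - (k.choose 2 : ℚ)) / ((k : ℚ) - 1) + 1

/-- `g₂(v,k) = C(v,2)/(k−1)`, the circular lower bound. -/
def g2 (v k : ℕ) : ℚ := (v.choose 2 : ℚ) / ((k : ℚ) - 1)

/-- The excess of a (linear) `SCCD(v,k,b)`: `e = (k−1)b + C(k−1,2) − C(v,2)`. -/
def linExcess (v k b : ℕ) : ℤ :=
  ((k - 1 : ℕ) : ℤ) * b + ((k - 1).choose 2 : ℤ) - (v.choose 2 : ℤ)

/-- The excess of a circular `CSCCD(v,k,b)`: `e = (k−1)b − C(v,2)`. -/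
def circExcess (v k b : ℕ) : ℤ :=
  ((k - 1 : ℕ) : ℤ) * b - (v.choose 2 : ℤ)

/-- An `SCCD(v,k,b)` is economical when `b = ⌈g₁(v,k)⌉`. -/
def EconomicalLin (v k b : ℕ) : Prop := (b : ℤ) = ⌈g1 v k⌉

/-- An `SCCD(v,k,b)` is tight when `b = g₁(v,k)` (in particular `g₁` is an integer). -/
def TightLin (v k b : ℕ) : Prop := (b : ℚ) = g1 v k

/-- A `CSCCD(v,k,b)` is economical when `b = ⌈g₂(v,k)⌉`. -/
def EconomicalCirc (v k b : ℕ) : Prop := (b : ℤ) = ⌈g2 v k⌉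

/-- A `CSCCD(v,k,b)` is tight when `b = g₂(v,k)` (in particular `g₂` is an integer). -/
def TightCirc (v k b : ℕ) : Prop := (b : ℚ) = g2 v k

namespace SCCD

variable {v k b : ℕ}

/-- The set of elements introduced in block `i`: all of `B 0` for `i = 0`,
and `B i \ B (i-1)` otherwise. -/
def introduced (D : SCCD v k b) (i : ℕ) : Finset ℕ :=
  if i = 0 then D.B 0 else D.B i \ D.B (i - 1)

/-- The pair `s` is covered on block `i`. -/
def coveredOn (D : SCCD v k b) (i : ℕ) (s : Finset ℕ) : Prop :=
  i < b ∧ s.card = 2 ∧ s ⊆ D.B i ∧ (s ∩ D.introduced i).Nonempty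

/-- The excess of block `i`: the number of pairs covered on `B i` that are also
covered on some earlier block. -/
noncomputable def blockExcess (D : SCCD v k b) (i : ℕ) : ℕ :=
  {s : Finset ℕ | D.coveredOn i s ∧ ∃ j < i, D.coveredOn j s}.ncard

/-- Block `i` is tight: no pair covered on it is covered on any other block. -/
def TightBlock (D : SCCD v k b) (i : ℕ) : Prop :=
  ∀ s, D.coveredOn i s → ∀ j, j < b → j ≠ i → ¬ D.coveredOn j s

/-- `S` is an inner unchanged subset, i.e. the intersection of two
consecutive blocks. -/
def IsInnerUnchanged (D : SCCD v k b) (S : Finset ℕ) : Prop :=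
  ∃ i, i + 1 < b ∧ S = D.B i ∩ D.B (i + 1)

/-- `S` may serve as the outer unchanged subset `U₀`: a `(k−1)`-subset of the
first block. -/
def IsU0 (D : SCCD v k b) (S : Finset ℕ) : Prop :=
  0 < b ∧ S ⊆ D.B 0 ∧ S.card = k - 1

/-- `S` may serve as the outer unchanged subset `U_b`: a `(k−1)`-subset of the
last block. -/
def IsUb (D : SCCD v k b) (S : Finset ℕ) : Prop :=
  0 < b ∧ S ⊆ D.B (b - 1) ∧ S.card = k - 1

/-- `S` is an unchanged subset (inner, or one of the outer choices). -/
def IsUnchanged (D : SCCD v k b) (S : Finset ℕ) : Prop :=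
  D.IsInnerUnchanged S ∨ D.IsU0 S ∨ D.IsUb S

/-- `E` is an expansion set: `v/(k−1)` pairwise disjoint unchanged subsets
whose union is `X`. -/
def IsExpansionSet (D : SCCD v k b) (E : Finset (Finset ℕ)) : Prop :=
  E.card = v / (k - 1) ∧ (∀ S ∈ E, D.IsUnchanged S) ∧
  (E : Set (Finset ℕ)).Pairwise Disjoint ∧ E.sup id = D.X

/-- `E` is an outer expansion set: it contains `U₀` or `U_b`. -/
def IsOuterExpansionSet (D : SCCD v k b) (E : Finset (Finset ℕ)) : Prop :=
  D.IsExpansionSet E ∧ ((∃ S ∈ E, D.IsU0 S) ∨ (∃ S ∈ E, D.IsUb S))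

/-- `E` is an outer expansion set containing both `U₀` and `U_b`. -/
def IsDoubleOuterExpansionSet (D : SCCD v k b) (E : Finset (Finset ℕ)) : Prop :=
  D.IsExpansionSet E ∧ (∃ S ∈ E, D.IsU0 S) ∧ (∃ S ∈ E, D.IsUb S)

/-- `E` is a disjoint-capable outer expansion set: it contains both `U₀` and
`U_b`, `U₀ = U₁ = ⋯ = U_{k−1}`, and `U_b = ⋃_{i=1}^{k−1} (B_i \ B_{i+1})`
(written here with blocks indexed from `0`). -/
def IsDisjointCapable (D : SCCD v k b) (E : Finset (Finset ℕ)) : Prop :=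
  D.IsExpansionSet E ∧ k ≤ b ∧
  ∃ S0 ∈ E, ∃ Sb ∈ E, D.IsU0 S0 ∧ D.IsUb Sb ∧
    (∀ i, i < k - 1 → S0 = D.B i ∩ D.B (i + 1)) ∧
    Sb = (Finset.range (k - 1)).biUnion (fun i => D.B i \ D.B (i + 1))

end SCCD

namespace CSCCD

variable {v k b : ℕ}

/-- `S` is an unchanged subset of a circular design (indices taken mod `b`). -/
def IsUnchanged (D : CSCCD v k b) (S : Finset ℕ) : Prop :=
  (∃ i, i + 1 < b ∧ S = D.toSCCD.B i ∩ D.toSCCD.B (i + 1)) ∨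
  (0 < b ∧ S = D.toSCCD.B (b - 1) ∩ D.toSCCD.B 0)

/-- `E` is an expansion set of a circular design. -/
def IsExpansionSet (D : CSCCD v k b) (E : Finset (Finset ℕ)) : Prop :=
  E.card = v / (k - 1) ∧ (∀ S ∈ E, D.IsUnchanged S) ∧
  (E : Set (Finset ℕ)).Pairwise Disjoint ∧ E.sup id = D.toSCCD.X

end CSCCD

lemma sccd_pos_b (v k b : ℕ) (hk : 2 ≤ k) (hkv : k ≤ v) (D : SCCD v k b) : 0 < b := by
  have h2 : 1 < D.X.card := by rw [D.cardX]; omega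
  obtain ⟨x, hx, y, hy, hxy⟩ := Finset.one_lt_card.mp h2
  obtain ⟨i, hi, -, -⟩ := D.covers x hx y hy hxy
  omega

lemma sccd_count (v k b : ℕ) (hk : 2 ≤ k) (hkv : k ≤ v) (D : SCCD v k b) :
    v.choose 2 ≤ k.choose 2 + (b - 1) * (k - 1) := by
  have hb : 0 < b := sccd_pos_b v k b hk hkv D
  set P : Finset (Finset ℕ) := D.X.powersetCard 2 with hP
  set N : ℕ → Finset (Finset ℕ) := fun i =>
    P.filter (fun s => s ⊆ D.B i ∧ ∀ j < i, ¬ s ⊆ D.B j) with hN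
  have hPsub : P ⊆ (Finset.range b).biUnion N := by
    intro s hs
    have hs' := Finset.mem_powersetCard.mp hs
    obtain ⟨x, y, hxy, hsxy⟩ := Finset.card_eq_two.mp hs'.2
    have hx : x ∈ D.X := hs'.1 (by simp [hsxy])
    have hy : y ∈ D.X := hs'.1 (by simp [hsxy])
    obtain ⟨i, hi, hxi, hyi⟩ := D.covers x hx y hy hxy
    have hcov : ∃ i, i < b ∧ s ⊆ D.B i := by
      refine ⟨i, hi, ?_⟩
      intro z hz
      rw [hsxy] at hz
      rcases Finset.mem_insert.mp hz with h | h
      · rwa [h]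
      · rw [Finset.mem_singleton.mp h]; exact hyi
    classical
    refine Finset.mem_biUnion.mpr ⟨Nat.find hcov, ?_, ?_⟩
    · exact Finset.mem_range.mpr (Nat.find_spec hcov).1
    · refine Finset.mem_filter.mpr ⟨hs, (Nat.find_spec hcov).2, ?_⟩
      intro j hj hsub
      have : j < b := lt_trans hj (Nat.find_spec hcov).1
      exact Nat.find_min hcov hj ⟨this, hsub⟩
  have hN0 : (N 0).card ≤ k.choose 2 := by
    have : N 0 ⊆ (D.B 0).powersetCard 2 := by
      intro s hs
      have hs' := Finset.mem_filter.mp hs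
      exact Finset.mem_powersetCard.mpr ⟨hs'.2.1, (Finset.mem_powersetCard.mp hs'.1).2⟩
    calc (N 0).card ≤ ((D.B 0).powersetCard 2).card := Finset.card_le_card this
      _ = k.choose 2 := by rw [Finset.card_powersetCard, D.cardB 0 hb]
  have hNi : ∀ i, i + 1 < b → (N (i + 1)).card ≤ k - 1 := by
    intro i hi
    have hdiff : (D.B (i + 1) \ D.B i).card = 1 := by
      have h1 : (D.B (i + 1) ∩ D.B i).card = k - 1 := by
        rw [Finset.inter_comm]; exact D.singleChange i hi
      have h2 : (D.B (i + 1)).card = k := D.cardB (i + 1) hi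
      have := Finset.card_inter_add_card_sdiff (D.B (i + 1)) (D.B i)
      omega
    obtain ⟨x, hx⟩ := Finset.card_eq_one.mp hdiff
    have hxmem : x ∈ D.B (i + 1) ∧ x ∉ D.B i := by
      have : x ∈ D.B (i + 1) \ D.B i := by rw [hx]; exact Finset.mem_singleton_self x
      exact Finset.mem_sdiff.mp this
    -- every s ∈ N (i+1) contains x
    have hxin : ∀ s ∈ N (i + 1), x ∈ s := by
      intro s hs
      have hs' := Finset.mem_filter.mp hs
      obtain ⟨hsub, hnot⟩ := hs'.2
      by_contra hxs
      refine hnot i (Nat.lt_succ_self i) ?_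
      intro z hz
      by_contra hz'
      have : z ∈ D.B (i + 1) \ D.B i := Finset.mem_sdiff.mpr ⟨hsub hz, hz'⟩
      rw [hx, Finset.mem_singleton] at this
      exact hxs (this ▸ hz)
    have hinj : Set.InjOn (fun s : Finset ℕ => s.erase x) ↑(N (i + 1)) := by
      intro s hs t ht hst
      have : insert x (s.erase x) = insert x (t.erase x) := by
        simp only at hst; rw [hst]
      rwa [Finset.insert_erase (hxin s hs), Finset.insert_erase (hxin t ht)] at this
    have hmaps : ∀ s ∈ N (i + 1), s.erase x ∈ ((D.B (i + 1)).erase x).powersetCard 1 := by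
      intro s hs
      have hs' := Finset.mem_filter.mp hs
      refine Finset.mem_powersetCard.mpr ⟨?_, ?_⟩
      · exact Finset.erase_subset_erase x hs'.2.1
      · rw [Finset.card_erase_of_mem (hxin s hs), (Finset.mem_powersetCard.mp hs'.1).2]
    calc (N (i + 1)).card ≤ (((D.B (i + 1)).erase x).powersetCard 1).card :=
          Finset.card_le_card_of_injOn _ hmaps hinj
      _ = (k - 1).choose 1 := by
          rw [Finset.card_powersetCard, Finset.card_erase_of_mem hxmem.1, D.cardB (i + 1) hi]
      _ = k - 1 := Nat.choose_one_right _
  have hsum : P.card ≤ ∑ i ∈ Finset.range b, (N i).card :=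
    le_trans (Finset.card_le_card hPsub) (Finset.card_biUnion_le)
  have hPcard : P.card = v.choose 2 := by
    rw [hP, Finset.card_powersetCard, D.cardX]
  obtain ⟨b', rfl⟩ : ∃ b', b = b' + 1 := ⟨b - 1, by omega⟩
  rw [Finset.sum_range_succ'] at hsum
  have htail : ∑ i ∈ Finset.range b', (N (i + 1)).card ≤ b' * (k - 1) := by
    calc ∑ i ∈ Finset.range b', (N (i + 1)).card
        ≤ ∑ _i ∈ Finset.range b', (k - 1) := by
          refine Finset.sum_le_sum ?_
          intro i hi
          exact hNi i (by simpa using Finset.mem_range.mp hi)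
      _ = b' * (k - 1) := by rw [Finset.sum_const, smul_eq_mul, Finset.card_range]
  simp only [Nat.add_sub_cancel]
  omega

/-- In any `SCCD(v,k,b)` with `2 ≤ k ≤ v`, we have
`b ≥ (C(v,2) − C(k,2))/(k−1) + 1`. -/
theorem stmt0 (v k b : ℕ) (hk : 2 ≤ k) (hkv : k ≤ v) (D : SCCD v k b) :
    (b : ℚ) ≥ ((v.choose 2 : ℚ) - (k.choose 2 : ℚ)) / ((k : ℚ) - 1) + 1 := by
  have hb : 0 < b := sccd_pos_b v k b hk hkv D
  have hcount := sccd_count v k b hk hkv D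
  have hq : (v.choose 2 : ℚ) ≤ (k.choose 2 : ℚ) + ((b : ℚ) - 1) * ((k : ℚ) - 1) := by
    have : ((v.choose 2 : ℕ) : ℚ) ≤ ((k.choose 2 + (b - 1) * (k - 1) : ℕ) : ℚ) := by
      exact_mod_cast hcount
    push_cast [Nat.cast_sub hb, Nat.cast_sub (by omega : 1 ≤ k)] at this
    convert this using 2
  have hk1 : (0 : ℚ) < (k : ℚ) - 1 := by
    have : (2 : ℚ) ≤ (k : ℚ) := by exact_mod_cast hk
    linarith
  rw [ge_iff_le, ← le_sub_iff_add_le, div_le_iff₀ hk1]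
  linarith
end

section
/- If there exists an SCCD(v,k,b) possessing an expansion set (in particular (k−1) divides v), then there exists an SCCD(v+1, k, b + v/(k−1)). Moreover, if the given SCCD(v,k,b) is tight, then the resulting SCCD(v+1, k, b + v/(k−1)) is tight. -/
namespace Stmt2Aux
open List Finset

variable {v k b : ℕ}

/-- `S` can be inserted at position `p` (between `B (p-1)` and `B p`). -/
def Ins (D : SCCD v k b) (p : ℕ) (S : Finset ℕ) : Prop :=
  p ≤ b ∧ 0 < b ∧ S.card = k - 1 ∧ (p < b → S ⊆ D.B p) ∧ (0 < p → S ⊆ D.B (p - 1))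

lemma exists_ins (D : SCCD v k b) {S : Finset ℕ} (h : D.IsUnchanged S) : ∃ p, Ins D p S := by
  rcases h with ⟨i, hi, rfl⟩ | ⟨hb, hsub, hcard⟩ | ⟨hb, hsub, hcard⟩
  · refine ⟨i + 1, by omega, by omega, D.singleChange i hi, fun _ => ?_, fun _ => ?_⟩
    · simpa using Finset.inter_subset_right
    · simpa using Finset.inter_subset_left
  · exact ⟨0, by omega, hb, hcard, fun _ => hsub, fun h => absurd h (by omega)⟩
  · exact ⟨b, le_rfl, hb, hcard, fun h => absurd h (by omega), fun _ => hsub⟩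

open scoped Classical in
noncomputable def pos (D : SCCD v k b) (S : Finset ℕ) : ℕ :=
  if h : ∃ p, Ins D p S then h.choose else 0

lemma ins_pos (D : SCCD v k b) {S : Finset ℕ} (h : D.IsUnchanged S) : Ins D (pos D S) S := by
  classical
  have h' := exists_ins D h
  rw [pos]
  rw [dif_pos h']
  exact h'.choose_spec

noncomputable def inf (D : SCCD v k b) : ℕ := D.X.sup id + 1

lemma inf_not_mem (D : SCCD v k b) : inf D ∉ D.X := by
  intro h
  have h2 := Finset.le_sup (f := id) h
  simp only [id, inf] at h2 h
  omega

noncomputable def insList (D : SCCD v k b) (E : Finset (Finset ℕ)) (p : ℕ) :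
    List (Finset ℕ) :=
  ((E.filter (fun S => pos D S = p)).toList).map (fun S => insert (inf D) S)

noncomputable def partL (D : SCCD v k b) (E : Finset (Finset ℕ)) : ℕ → List (Finset ℕ)
  | 0 => []
  | p + 1 => (partL D E p ++ insList D E p) ++ [D.B p]

lemma mem_insList {D : SCCD v k b} {E : Finset (Finset ℕ)} {p : ℕ} {T : Finset ℕ}
    (h : T ∈ insList D E p) : ∃ S ∈ E, pos D S = p ∧ T = insert (inf D) S := by
  simp only [insList, List.mem_map, Finset.mem_toList, Finset.mem_filter] at h
  rcases h with ⟨S, ⟨hS, hp⟩, rfl⟩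
  exact ⟨S, hS, hp, rfl⟩

lemma mem_partL {D : SCCD v k b} {E : Finset (Finset ℕ)} {p : ℕ} {T : Finset ℕ} :
    T ∈ partL D E p ↔ ∃ q < p, T = D.B q ∨ T ∈ insList D E q := by
  induction p with
  | zero => simp [partL]
  | succ p ih =>
    simp only [partL, List.mem_append, ih, List.mem_singleton]
    constructor
    · rintro ((⟨q, hq, h⟩ | h) | h)
      · exact ⟨q, by omega, h⟩
      · exact ⟨p, by omega, Or.inr h⟩
      · exact ⟨p, by omega, Or.inl h⟩
    · rintro ⟨q, hq, h | h⟩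
      · rcases Nat.lt_or_ge q p with h' | h'
        · exact Or.inl (Or.inl ⟨q, h', Or.inl h⟩)
        · have : q = p := by omega
          subst this; exact Or.inr h
      · rcases Nat.lt_or_ge q p with h' | h'
        · exact Or.inl (Or.inl ⟨q, h', Or.inr h⟩)
        · have : q = p := by omega
          subst this; exact Or.inl (Or.inr h)

lemma length_partL (D : SCCD v k b) (E : Finset (Finset ℕ)) (p : ℕ) :
    (partL D E p).length = p + ∑ q ∈ Finset.range p, (insList D E q).length := by
  induction p with
  | zero => simp [partL]
  | succ p ih =>
    simp [partL, ih, Finset.sum_range_succ]; ring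

end Stmt2Aux

section Part2
open List Finset
variable {v k b : ℕ} {D : SCCD v k b} {E : Finset (Finset ℕ)}
namespace Stmt2Aux

lemma insElem (hE : D.IsExpansionSet E) {S : Finset ℕ} (hS : S ∈ E) :
    Ins D (pos D S) S := ins_pos D (hE.2.1 S hS)

lemma sub_block (hE : D.IsExpansionSet E) {S : Finset ℕ} (hS : S ∈ E) :
    ∃ q < b, S ⊆ D.B q := by
  obtain ⟨hle, hb, hcard, h1, h2⟩ := insElem hE hS
  rcases Nat.lt_or_ge (pos D S) b with h | h
  · exact ⟨pos D S, h, h1 h⟩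
  · have hp : pos D S = b := by omega
    refine ⟨b - 1, by omega, ?_⟩
    have := h2 (by omega)
    rwa [hp] at this

lemma k_ge_two (hE : D.IsExpansionSet E) (hne : E.Nonempty) : 2 ≤ k := by
  by_contra h
  have hk : k - 1 = 0 := by omega
  have : E.card = 0 := by rw [hE.1, hk, Nat.div_zero]
  rw [Finset.card_eq_zero] at this
  rcases hne with ⟨S, hS⟩
  simp [this] at hS

lemma b_pos (hE : D.IsExpansionSet E) (hne : E.Nonempty) : 0 < b := by
  rcases hne with ⟨S, hS⟩
  exact (insElem hE hS).2.1

lemma collide (hE : D.IsExpansionSet E) {S S' : Finset ℕ} (hS : S ∈ E) (hS' : S' ∈ E)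
    (hne : S ≠ S') (hp : pos D S = pos D S') :
    (insert (inf D) S ∩ insert (inf D) S').card = k - 1 := by
  have hdisj : Disjoint S S' := hE.2.2.1 hS hS' hne
  have hcS := (insElem hE hS).2.2.1
  have hcS' := (insElem hE hS').2.2.1
  -- find a common block
  obtain ⟨hle, hb, _, h1, h2⟩ := insElem hE hS
  obtain ⟨_, _, _, h1', h2'⟩ := insElem hE hS'
  have hcommon : ∃ q < b, S ⊆ D.B q ∧ S' ⊆ D.B q := by
    rcases Nat.lt_or_ge (pos D S) b with h | h
    · exact ⟨pos D S, h, h1 h, by rw [hp] at h ⊢; exact h1' h⟩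
    · have hpb : pos D S = b := by omega
      refine ⟨b - 1, by omega, ?_, ?_⟩
      · have := h2 (by omega); rwa [hpb] at this
      · have := h2' (by rw [← hp]; omega); rwa [← hp, hpb] at this
  obtain ⟨q, hq, hsub, hsub'⟩ := hcommon
  have hunion : (S ∪ S').card ≤ k := by
    have := Finset.card_le_card (Finset.union_subset hsub hsub')
    rwa [D.cardB q hq] at this
  rw [Finset.card_union_of_disjoint hdisj, hcS, hcS'] at hunion
  have hk1 : k - 1 ≠ 0 := by
    intro h0
    rw [h0, Finset.card_eq_zero] at hcS hcS'
    exact hne (hcS.trans hcS'.symm)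
  have hk2 : k = 2 := by omega
  have hInter : insert (inf D) S ∩ insert (inf D) S' = {inf D} := by
    ext x
    simp only [Finset.mem_inter, Finset.mem_insert, Finset.mem_singleton]
    constructor
    · rintro ⟨hx | hx, hy | hy⟩
      · exact hx
      · exact hx
      · exact hy
      · exact absurd (Finset.disjoint_left.mp hdisj hx) (fun h => h hy)
    · rintro rfl; exact ⟨Or.inl rfl, Or.inl rfl⟩
  rw [hInter, Finset.card_singleton, hk2]

lemma chain_insList (hE : D.IsExpansionSet E) (p : ℕ) :
    List.Chain' (fun A B => (A ∩ B).card = k - 1) (insList D E p) := by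
  apply List.Pairwise.isChain
  rw [insList, List.pairwise_map]
  refine List.Pairwise.imp_of_mem ?_ (Finset.nodup_toList _)
  intro S S' hS hS' hne
  rw [Finset.mem_toList, Finset.mem_filter] at hS hS'
  exact collide hE hS.1 hS'.1 hne (hS.2.trans hS'.2.symm)

lemma insList_bounds (hE : D.IsExpansionSet E) {p : ℕ} {T : Finset ℕ}
    (hT : T ∈ insList D E p) :
    (p < b → (T ∩ D.B p).card = k - 1) ∧ (0 < p → (D.B (p - 1) ∩ T).card = k - 1) := by
  obtain ⟨S, hS, hpos, rfl⟩ := mem_insList hT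
  obtain ⟨hle, hb, hcard, h1, h2⟩ := insElem hE hS
  rw [hpos] at h1 h2
  constructor
  · intro hpb
    have hinf : inf D ∉ D.B p := fun h => inf_not_mem D (D.subX p hpb h)
    rw [Finset.insert_inter_of_notMem hinf, Finset.inter_eq_left.mpr (h1 hpb), hcard]
  · intro hp0
    have hq : p - 1 < b := by omega
    have hinf : inf D ∉ D.B (p - 1) := fun h => inf_not_mem D (D.subX _ hq h)
    rw [Finset.inter_insert_of_notMem hinf, Finset.inter_eq_right.mpr (h2 hp0), hcard]

lemma getLast_partL (D : SCCD v k b) (E : Finset (Finset ℕ)) {p : ℕ} (hp : 0 < p) :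
    (partL D E p).getLast? = some (D.B (p - 1)) := by
  obtain ⟨q, rfl⟩ : ∃ q, p = q + 1 := ⟨p - 1, by omega⟩
  simp [partL, List.getLast?_concat]

lemma chain_partL (hE : D.IsExpansionSet E) :
    ∀ p, p ≤ b → List.Chain' (fun A B => (A ∩ B).card = k - 1) (partL D E p) := by
  intro p
  induction p with
  | zero => intro _; simp [partL, List.Chain']
  | succ p ih =>
    intro hpb
    have hpb' : p < b := by omega
    rw [partL, List.Chain', List.isChain_append]
    refine ⟨?_, by simp, ?_⟩
    · rw [List.isChain_append]
      refine ⟨ih (by omega), chain_insList hE p, ?_⟩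
      intro x hx y hy
      rcases Nat.eq_zero_or_pos p with rfl | hp0
      · simp [partL] at hx
      · rw [getLast_partL D E hp0, Option.mem_some_iff] at hx
        subst hx
        exact (insList_bounds hE (List.mem_of_mem_head? hy)).2 hp0
    · intro x hx y hy
      simp only [List.head?, Option.mem_some_iff] at hy
      subst hy
      rw [List.getLast?_append] at hx
      rcases hins : (insList D E p).getLast? with _ | T
      · rw [hins] at hx
        rw [show (Option.none (α := Finset ℕ)).or (partL D E p).getLast? = (partL D E p).getLast? from rfl] at hx
        rcases Nat.eq_zero_or_pos p with rfl | hp0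
        · simp [partL] at hx
        · rw [getLast_partL D E hp0, Option.mem_some_iff] at hx
          subst hx
          have := D.singleChange (p - 1) (by omega)
          have hpp : p - 1 + 1 = p := by omega
          rwa [hpp] at this
      · rw [hins] at hx
        rw [show (some T).or (partL D E p).getLast? = some T from rfl, Option.mem_some_iff] at hx
        subst hx
        have hTmem : T ∈ insList D E p := List.mem_of_mem_getLast? (by rw [hins]; rfl)
        exact (insList_bounds hE hTmem).1 hpb'

noncomputable def bigL (D : SCCD v k b) (E : Finset (Finset ℕ)) : List (Finset ℕ) :=
  partL D E b ++ insList D E b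

lemma chain_bigL (hE : D.IsExpansionSet E) (hb : 0 < b) :
    List.Chain' (fun A B => (A ∩ B).card = k - 1) (bigL D E) := by
  rw [bigL, List.Chain', List.isChain_append]
  refine ⟨chain_partL hE b le_rfl, chain_insList hE b, ?_⟩
  intro x hx y hy
  rw [getLast_partL D E hb, Option.mem_some_iff] at hx
  subst hx
  exact (insList_bounds hE (List.mem_of_mem_head? hy)).2 hb

lemma length_bigL (hE : D.IsExpansionSet E) : (bigL D E).length = b + v / (k - 1) := by
  classical
  rw [bigL, List.length_append, length_partL]
  have hlen : ∀ q, (insList D E q).length = (E.filter (fun S => pos D S = q)).card := by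
    intro q; rw [insList, List.length_map, Finset.length_toList]
  have hsum : ∑ q ∈ Finset.range (b + 1), (insList D E q).length = E.card := by
    rw [Finset.card_eq_sum_card_fiberwise (f := pos D) (t := Finset.range (b + 1))
      (fun S hS => Finset.mem_range.mpr (by have := (insElem hE hS).1; omega))]
    exact Finset.sum_congr rfl fun q _ => hlen q
  have : ∑ q ∈ Finset.range b, (insList D E q).length + (insList D E b).length = E.card := by
    rw [← hsum, Finset.sum_range_succ]
  rw [hE.1] at this
  omega

end Stmt2Aux
end Part2

section Part3
open List Finset
variable {v k b : ℕ} {D : SCCD v k b} {E : Finset (Finset ℕ)}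
namespace Stmt2Aux

lemma elem_props (hE : D.IsExpansionSet E) (hk : 2 ≤ k) :
    ∀ T ∈ bigL D E, T.card = k ∧ T ⊆ insert (inf D) D.X := by
  have hins : ∀ p, ∀ T ∈ insList D E p, T.card = k ∧ T ⊆ insert (inf D) D.X := by
    intro p T hT
    obtain ⟨S, hS, hpos, rfl⟩ := mem_insList hT
    obtain ⟨q, hq, hsub⟩ := sub_block hE hS
    have hSX : S ⊆ D.X := hsub.trans (D.subX q hq)
    have hinfS : inf D ∉ S := fun h => inf_not_mem D (hSX h)
    constructor
    · rw [Finset.card_insert_of_notMem hinfS, (insElem hE hS).2.2.1]; omega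
    · exact Finset.insert_subset_insert _ hSX
  intro T hT
  rw [bigL, List.mem_append] at hT
  rcases hT with hT | hT
  · rw [mem_partL] at hT
    obtain ⟨q, hq, hT | hT⟩ := hT
    · subst hT
      exact ⟨D.cardB q hq, (D.subX q hq).trans (Finset.subset_insert _ _)⟩
    · exact hins _ _ hT
  · exact hins _ _ hT

lemma blocks_mem_bigL {q : ℕ} (hq : q < b) : D.B q ∈ bigL D E := by
  rw [bigL, List.mem_append]; exact Or.inl (mem_partL.mpr ⟨q, hq, Or.inl rfl⟩)

lemma insert_mem_bigL (hE : D.IsExpansionSet E) {S : Finset ℕ} (hS : S ∈ E) :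
    insert (inf D) S ∈ bigL D E := by
  have hmem : insert (inf D) S ∈ insList D E (pos D S) := by
    rw [insList, List.mem_map]
    exact ⟨S, Finset.mem_toList.mpr (Finset.mem_filter.mpr ⟨hS, rfl⟩), rfl⟩
  have hle := (insElem hE hS).1
  rw [bigL, List.mem_append]
  rcases Nat.lt_or_ge (pos D S) b with h | h
  · exact Or.inl (mem_partL.mpr ⟨pos D S, h, Or.inr hmem⟩)
  · have hb : pos D S = b := by omega
    rw [hb] at hmem
    exact Or.inr hmem

noncomputable def expand (hE : D.IsExpansionSet E) (hne : E.Nonempty) :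
    SCCD (v + 1) k (b + v / (k - 1)) where
  X := insert (inf D) D.X
  B := fun i => (bigL D E).getD i ∅
  cardX := by rw [Finset.card_insert_of_notMem (inf_not_mem D), D.cardX]
  cardB := by
    intro i hi
    beta_reduce
    rw [← length_bigL hE] at hi
    rw [List.getD_eq_getElem _ _ hi]
    exact (elem_props hE (k_ge_two hE hne) _ (List.getElem_mem _)).1
  subX := by
    intro i hi
    beta_reduce
    rw [← length_bigL hE] at hi
    rw [List.getD_eq_getElem _ _ hi]
    exact (elem_props hE (k_ge_two hE hne) _ (List.getElem_mem _)).2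
  singleChange := by
    intro i hi
    beta_reduce
    rw [← length_bigL hE] at hi
    rw [List.getD_eq_getElem _ _ (by omega : i < (bigL D E).length), List.getD_eq_getElem _ _ hi]
    exact List.isChain_iff_getElem.mp (chain_bigL hE (b_pos hE hne)) i (by omega)
  covers := by
    intro x hx y hy hxy
    have key : ∀ T ∈ bigL D E, x ∈ T → y ∈ T →
        ∃ i, i < b + v / (k - 1) ∧ x ∈ (bigL D E).getD i ∅ ∧ y ∈ (bigL D E).getD i ∅ := by
      intro T hT hxT hyT
      obtain ⟨n, hn⟩ := List.mem_iff_get.mp hT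
      have hg : (bigL D E).getD n.1 ∅ = T := by
        rw [List.getD_eq_getElem _ _ n.2]; exact hn
      exact ⟨n.1, by rw [← length_bigL hE]; exact n.2, by rw [hg]; exact hxT,
        by rw [hg]; exact hyT⟩
    have hsup := hE.2.2.2
    rcases Finset.mem_insert.mp hx with rfl | hxX
    · rcases Finset.mem_insert.mp hy with rfl | hyX
      · exact absurd rfl hxy
      · rw [← hsup] at hyX
        obtain ⟨S, hS, hyS⟩ := Finset.mem_sup.mp hyX
        exact key _ (insert_mem_bigL hE hS) (Finset.mem_insert_self _ _)
          (Finset.mem_insert_of_mem hyS)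
    · rcases Finset.mem_insert.mp hy with rfl | hyX
      · rw [← hsup] at hxX
        obtain ⟨S, hS, hxS⟩ := Finset.mem_sup.mp hxX
        exact key _ (insert_mem_bigL hE hS) (Finset.mem_insert_of_mem hxS)
          (Finset.mem_insert_self _ _)
      · obtain ⟨i, hi, h1, h2⟩ := D.covers x hxX y hyX hxy
        exact key _ (blocks_mem_bigL hi) h1 h2

lemma tight_step (hdvd : (k - 1) ∣ v) :
    TightLin v k b → TightLin (v + 1) k (b + v / (k - 1)) := by
  intro h
  unfold TightLin g1 at h ⊢
  rcases Nat.eq_zero_or_pos v with rfl | hv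
  · simpa using h
  · have hk : k - 1 ≠ 0 := by
      intro h0
      rw [h0] at hdvd
      omega
    have hk1 : (1 : ℕ) ≤ k := by omega
    have h1 : ((k - 1 : ℕ) : ℚ) = (k : ℚ) - 1 := by
      push_cast [hk1]; ring
    have hkQ : ((k : ℚ) - 1) ≠ 0 := by
      rw [← h1]
      exact_mod_cast hk
    have hcast : ((v / (k - 1) : ℕ) : ℚ) = (v : ℚ) / ((k : ℚ) - 1) := by
      rw [Nat.cast_div hdvd (by rw [h1]; exact hkQ), h1]
    have hch : (((v + 1).choose 2 : ℕ) : ℚ) = (v.choose 2 : ℚ) + (v : ℚ) := by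
      have h2 : (v + 1).choose 2 = v.choose 1 + v.choose 2 := Nat.choose_succ_succ v 1
      rw [h2, Nat.choose_one_right]
      push_cast
      ring
    push_cast
    rw [hcast, hch, h]
    field_simp
    ring

end Stmt2Aux
end Part3


/-- If an `SCCD(v,k,b)` with an expansion set exists (in particular
`(k−1) ∣ v`), then an `SCCD(v+1, k, b + v/(k−1))` exists; moreover tightness is
preserved. -/
theorem stmt2 (v k b : ℕ) (D : SCCD v k b) (E : Finset (Finset ℕ))
    (hE : D.IsExpansionSet E) (hdvd : (k - 1) ∣ v) :
    Nonempty (SCCD (v + 1) k (b + v / (k - 1))) ∧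
      (TightLin v k b → TightLin (v + 1) k (b + v / (k - 1))) := by
  refine ⟨?_, Stmt2Aux.tight_step hdvd⟩
  by_cases hne : E.Nonempty
  · exact ⟨Stmt2Aux.expand hE hne⟩
  · rw [Finset.not_nonempty_iff_eq_empty] at hne
    subst hne
    have hX : D.X = ∅ := by rw [← hE.2.2.2]; simp
    have hv : v = 0 := by rw [← D.cardX, hX]; simp
    subst hv
    rw [Nat.zero_div, Nat.add_zero]
    refine ⟨⟨{0}, D.B, by simp, D.cardB, ?_, D.singleChange, ?_⟩⟩
    · intro i hi a ha
      exact absurd (D.subX i hi ha) (by simp [hX])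
    · intro x hx y hy hxy
      simp only [Finset.mem_singleton] at hx hy
      exact absurd (hx.trans hy.symm) hxy
end

section
/- If there exists an SCCD(v,k,b) with excess e possessing an outer expansion set, then there exists an SCCD(v+2, k, b') with excess e + k − 2, where b' = b + 2v/(k−1) + 1. -/
def patOne (x y : ℕ) (Sstar Sxy : Finset ℕ) (o : Bool) (S : Finset ℕ) : List (Finset ℕ) :=
  if S = Sstar then
    [insert (if o then x else y) S, Sxy, insert (if o then y else x) S]
  else
    [insert (if o then x else y) S, insert (if o then y else x) S]

def patL (x y : ℕ) (Sstar Sxy : Finset ℕ) : List (Finset ℕ) → List (Finset ℕ)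
  | [] => []
  | [S] => patOne x y Sstar Sxy true S
  | S :: S' :: _ => patOne x y Sstar Sxy true S ++ patOne x y Sstar Sxy false S'

lemma patOne_length (x y : ℕ) (Sstar Sxy : Finset ℕ) (o : Bool) (S : Finset ℕ) :
    (patOne x y Sstar Sxy o S).length = if S = Sstar then 3 else 2 := by
  unfold patOne; split <;> simp

lemma patOne_head? (x y : ℕ) (Sstar Sxy : Finset ℕ) (o : Bool) (S : Finset ℕ) :
    (patOne x y Sstar Sxy o S).head? = some (insert (if o then x else y) S) := by
  unfold patOne; split <;> simp

lemma patOne_getLast? (x y : ℕ) (Sstar Sxy : Finset ℕ) (o : Bool) (S : Finset ℕ) :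
    (patOne x y Sstar Sxy o S).getLast? = some (insert (if o then y else x) S) := by
  unfold patOne; split <;> simp

lemma patOne_mem (x y : ℕ) (Sstar Sxy : Finset ℕ) (o : Bool) (S : Finset ℕ) :
    insert x S ∈ patOne x y Sstar Sxy o S ∧ insert y S ∈ patOne x y Sstar Sxy o S := by
  unfold patOne; cases o <;> split <;> simp

lemma patOne_mem_star (x y : ℕ) (Sstar Sxy : Finset ℕ) (o : Bool) :
    Sxy ∈ patOne x y Sstar Sxy o Sstar := by
  unfold patOne; simp

lemma patOne_mem_cases (x y : ℕ) (Sstar Sxy : Finset ℕ) (o : Bool) (S A : Finset ℕ)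
    (hA : A ∈ patOne x y Sstar Sxy o S) :
    A = insert x S ∨ A = insert y S ∨ A = Sxy := by
  unfold patOne at hA; cases o <;> revert hA <;> split <;> simp <;> tauto

lemma patL_mem_cases (x y : ℕ) (Sstar Sxy : Finset ℕ) (l : List (Finset ℕ)) (A : Finset ℕ)
    (hA : A ∈ patL x y Sstar Sxy l) :
    ∃ S ∈ l, A = insert x S ∨ A = insert y S ∨ A = Sxy := by
  match l with
  | [] => simp [patL] at hA
  | [S] => exact ⟨S, by simp, patOne_mem_cases _ _ _ _ _ _ _ hA⟩
  | S :: S' :: rest =>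
    rw [patL, List.mem_append] at hA
    rcases hA with h | h
    · exact ⟨S, by simp, patOne_mem_cases _ _ _ _ _ _ _ h⟩
    · exact ⟨S', by simp, patOne_mem_cases _ _ _ _ _ _ _ h⟩

lemma patL_mem (x y : ℕ) (Sstar Sxy : Finset ℕ) (l : List (Finset ℕ)) (S : Finset ℕ)
    (hl : l.length ≤ 2) (hS : S ∈ l) :
    insert x S ∈ patL x y Sstar Sxy l ∧ insert y S ∈ patL x y Sstar Sxy l := by
  match l with
  | [] => simp at hS
  | [T] =>
    simp at hS; subst hS; exact patOne_mem _ _ _ _ _ _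
  | [T, T'] =>
    simp at hS
    rcases hS with h | h <;> subst h
    · have := patOne_mem x y Sstar Sxy true S
      constructor <;> [exact List.mem_append_left _ this.1; exact List.mem_append_left _ this.2]
    · have := patOne_mem x y Sstar Sxy false S
      constructor <;> [exact List.mem_append_right _ this.1; exact List.mem_append_right _ this.2]
  | T :: T' :: T'' :: rest => simp at hl

lemma patL_mem_star (x y : ℕ) (Sstar Sxy : Finset ℕ) (l : List (Finset ℕ))
    (hl : l.length ≤ 2) (hS : Sstar ∈ l) :
    Sxy ∈ patL x y Sstar Sxy l := by
  match l with
  | [] => simp at hS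
  | [T] => simp at hS; subst hS; exact patOne_mem_star _ _ _ _ _
  | [T, T'] =>
    simp at hS
    rcases hS with h | h <;> subst h
    · exact List.mem_append_left _ (patOne_mem_star _ _ _ _ _)
    · exact List.mem_append_right _ (patOne_mem_star _ _ _ _ _)
  | T :: T' :: T'' :: rest => simp at hl

lemma helper_sccd_of_list (v k : ℕ) (X : Finset ℕ) (L : List (Finset ℕ))
    (hX : X.card = v) (hL : ∀ A ∈ L, A.card = k ∧ A ⊆ X)
    (hchain : L.Chain' (fun A A' => (A ∩ A').card = k - 1))
    (hcov : ∀ a ∈ X, ∀ c ∈ X, a ≠ c → ∃ A ∈ L, a ∈ A ∧ c ∈ A) :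
    Nonempty (SCCD v k L.length) := by
  refine ⟨⟨X, fun n => L.getD n ∅, hX, ?_, ?_, ?_, ?_⟩⟩
  · intro i hi
    show (L.getD i ∅).card = k
    rw [List.getD_eq_getElem _ _ hi]
    exact (hL _ (List.getElem_mem hi)).1
  · intro i hi
    show L.getD i ∅ ⊆ X
    rw [List.getD_eq_getElem _ _ hi]
    exact (hL _ (List.getElem_mem hi)).2
  · intro i hi
    show (L.getD i ∅ ∩ L.getD (i+1) ∅).card = k - 1
    rw [List.getD_eq_getElem _ _ (by omega : i < L.length), List.getD_eq_getElem _ _ hi]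
    have := List.isChain_iff_getElem.mp hchain i (by omega)
    simpa using this
  · intro a ha c hc hac
    obtain ⟨A, hA, haA, hcA⟩ := hcov a ha c hc hac
    obtain ⟨n, hn, rfl⟩ := List.mem_iff_getElem.mp hA
    refine ⟨n, hn, ?_⟩
    show a ∈ L.getD n ∅ ∧ c ∈ L.getD n ∅
    rw [List.getD_eq_getElem _ _ hn]
    exact ⟨haA, hcA⟩
/-- From an `SCCD(v,k,b)` with excess `e` possessing an outer
expansion set, one obtains an `SCCD(v+2, k, b + 2v/(k−1) + 1)` with excess
`e + k − 2`. -/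
theorem stmt8 (v k b : ℕ) (D : SCCD v k b) (E : Finset (Finset ℕ))
    (hE : D.IsOuterExpansionSet E) :
    ∃ _D' : SCCD (v + 2) k (b + 2 * (v / (k - 1)) + 1),
      linExcess (v + 2) k (b + 2 * (v / (k - 1)) + 1)
        = linExcess v k b + (k : ℤ) - 2 := by
  classical
  obtain ⟨⟨hcardE, hunch, hdisj, hsup⟩, houter⟩ := hE
  have hEne : E.Nonempty := by
    rcases houter with ⟨S, hS, _⟩ | ⟨S, hS, _⟩ <;> exact ⟨S, hS⟩
  have hb : 0 < b := by
    rcases houter with ⟨S, hS, h, _⟩ | ⟨S, hS, h, _⟩ <;> exact h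
  have hdisj' : ∀ S ∈ E, ∀ T ∈ E, S ≠ T → Disjoint S T :=
    fun S hS T hT h => hdisj hS hT h
  -- each member of E has card k - 1
  have hcardS : ∀ S ∈ E, S.card = k - 1 := by
    intro S hS
    rcases hunch S hS with ⟨i, hi, rfl⟩ | ⟨_, _, h⟩ | ⟨_, _, h⟩
    · exact D.singleChange i hi
    · exact h
    · exact h
  -- v = E.card * (k-1)
  have hv : v = E.card * (k - 1) := by
    have h1 : D.X = E.biUnion id := by rw [← hsup, Finset.sup_eq_biUnion]
    have h2 : (E.biUnion id).card = ∑ S ∈ E, (id S).card := Finset.card_biUnion hdisj'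
    rw [← D.cardX, h1, h2]
    simp only [id]
    rw [Finset.sum_congr rfl hcardS]
    simp [mul_comm]
  have hk : 2 ≤ k := by
    by_contra hk
    have hk1 : k - 1 = 0 := by omega
    have hv0 : v = 0 := by rw [hv, hk1]; simp
    have : E.card = 0 := by rw [hcardE, hv0]; simp
    obtain ⟨S, hS⟩ := hEne
    rw [Finset.card_eq_zero] at this
    simp [this] at hS
  set m := k - 1 with hm
  have hm1 : 1 ≤ m := by omega
  have hkm : k = m + 1 := by omega
  set r := v / (k - 1) with hr
  have hrE : E.card = r := hcardE
  have hvrm : v = r * m := by rw [hv, hrE]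
  -- fresh elements
  set x := D.X.sup id + 1 with hxdef
  set y := D.X.sup id + 2 with hydef
  have hfresh : ∀ z ∈ D.X, z ≠ x ∧ z ≠ y := by
    intro z hz
    have := Finset.le_sup (f := id) hz
    simp only [id] at this
    omega
  have hxX : x ∉ D.X := fun h => by have := (hfresh x h).1; simp at this
  have hyX : y ∉ D.X := fun h => by have := (hfresh y h).2; simp at this
  have hxy : x ≠ y := by omega
  set X' := insert x (insert y D.X) with hX'def
  have hX'card : X'.card = v + 2 := by
    rw [hX'def, Finset.card_insert_of_notMem, Finset.card_insert_of_notMem hyX, D.cardX]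
    simp only [Finset.mem_insert]
    push_neg
    exact ⟨hxy, hxX⟩
  -- special set for the pair {x, y}
  obtain ⟨Sstar, hSstarE⟩ := hEne
  have hSstar_ne : Sstar.Nonempty := by
    rw [← Finset.card_pos, hcardS Sstar hSstarE]; omega
  obtain ⟨sstar, hsstar⟩ := hSstar_ne
  set Sxy := insert x (insert y (Sstar.erase sstar)) with hSxydef
  -- slot assignment
  set tau : Finset ℕ → ℕ := fun S =>
    if h : ∃ i, i + 1 < b ∧ S = D.B i ∩ D.B (i + 1) then h.choose + 1
    else if 0 < b ∧ S ⊆ D.B 0 ∧ S.card = k - 1 then 0 else b with htaudef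
  have htauds : ∀ S, tau S =
      if h : ∃ i, i + 1 < b ∧ S = D.B i ∩ D.B (i + 1) then h.choose + 1
      else if 0 < b ∧ S ⊆ D.B 0 ∧ S.card = k - 1 then 0 else b := fun S => rfl
  have htau_le : ∀ S, tau S ≤ b := by
    intro S
    rw [htauds S]
    split
    · next h => have := h.choose_spec.1; omega
    · split <;> omega
  have htau0 : ∀ S ∈ E, tau S = 0 → S ⊆ D.B 0 := by
    intro S hS h0
    rw [htauds S] at h0
    split at h0
    · omega
    · split at h0
      · next hc => exact hc.2.1
      · omega
  have htaub : ∀ S ∈ E, tau S = b → S ⊆ D.B (b - 1) := by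
    intro S hS hbb
    rw [htauds S] at hbb
    split at hbb
    · next h => have := h.choose_spec.1; omega
    · split at hbb
      · omega
      · next h1 h2 =>
        rcases hunch S hS with hin | hu0 | hub
        · exact absurd hin h1
        · exact absurd hu0 h2
        · exact hub.2.1
  have htau_inner : ∀ S ∈ E, 0 < tau S → tau S < b →
      S = D.B (tau S - 1) ∩ D.B (tau S) := by
    intro S hS h0 hlt
    by_cases hI : ∃ i, i + 1 < b ∧ S = D.B i ∩ D.B (i + 1)
    · have ht : tau S = hI.choose + 1 := by rw [htauds S, dif_pos hI]
      obtain ⟨hi2, hSeq2⟩ := hI.choose_spec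
      rw [ht, Nat.add_sub_cancel]
      exact hSeq2
    · have ht := htauds S
      rw [dif_neg hI] at ht
      split at ht <;> omega
  have hsubL : ∀ S ∈ E, S ⊆ D.B (tau S - 1) := by
    intro S hS
    rcases Nat.eq_or_lt_of_le (htau_le S) with hbb | hlt
    · intro a ha
      rw [hbb]
      exact htaub S hS hbb (by exact ha)
    · rcases Nat.eq_zero_or_pos (tau S) with h0 | h0
      · intro a ha
        rw [h0]
        exact htau0 S hS h0 ha
      · intro a ha
        have heq := htau_inner S hS h0 hlt
        rw [heq] at ha
        exact (Finset.mem_inter.mp ha).1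
  have hsubR : ∀ S ∈ E, tau S < b → S ⊆ D.B (tau S) := by
    intro S hS hlt
    rcases Nat.eq_zero_or_pos (tau S) with h0 | h0
    · intro a ha
      rw [h0]
      exact htau0 S hS h0 ha
    · intro a ha
      have heq := htau_inner S hS h0 hlt
      rw [heq] at ha
      exact (Finset.mem_inter.mp ha).2
  -- fiber lists
  set lst : ℕ → List (Finset ℕ) := fun t => (E.filter (fun S => tau S = t)).toList
    with hlstdef
  have hlst_mem : ∀ t S, S ∈ lst t ↔ (S ∈ E ∧ tau S = t) := by
    intro t S
    show S ∈ (E.filter (fun S => tau S = t)).toList ↔ _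
    rw [Finset.mem_toList, Finset.mem_filter]
  have hfib_card_le : ∀ t ≤ b, (E.filter (fun S => tau S = t)).card * m ≤ m + 1 := by
    intro t ht
    have hsub : (E.filter (fun S => tau S = t)).biUnion id ⊆ D.B (t - 1) := by
      intro a ha
      rw [Finset.mem_biUnion] at ha
      obtain ⟨S, hS, haS⟩ := ha
      rw [Finset.mem_filter] at hS
      have h1 := hsubL S hS.1
      rw [hS.2] at h1
      exact h1 haS
    have hBcard : (D.B (t - 1)).card = k := D.cardB (t - 1) (by omega)
    have h1 : ((E.filter (fun S => tau S = t)).biUnion id).card ≤ k :=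
      hBcard ▸ Finset.card_le_card hsub
    have h2 : ((E.filter (fun S => tau S = t)).biUnion id).card
        = ∑ S ∈ E.filter (fun S => tau S = t), (id S).card :=
      Finset.card_biUnion (fun S hS T hT hne =>
        hdisj' S (Finset.mem_filter.mp hS).1 T (Finset.mem_filter.mp hT).1 hne)
    rw [h2] at h1
    simp only [id] at h1
    rw [Finset.sum_congr rfl (fun S hS => hcardS S (Finset.mem_filter.mp hS).1)] at h1
    simp only [Finset.sum_const, smul_eq_mul] at h1
    omega
  have hlst_len : ∀ t ≤ b, (lst t).length ≤ 2 ∧ ((lst t).length = 2 → m = 1) := by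
    intro t ht
    have h1 := hfib_card_le t ht
    have h2 : (lst t).length = (E.filter (fun S => tau S = t)).card :=
      Finset.length_toList _
    rw [h2]
    constructor
    · by_contra h
      push_neg at h
      nlinarith
    · intro h2'
      rw [h2'] at h1
      omega
  -- membership and intersection helpers
  have hEX : ∀ S ∈ E, S ⊆ D.X := by
    intro S hS a ha
    rw [← hsup]
    exact Finset.mem_sup.mpr ⟨S, hS, ha⟩
  have hSstarX : Sstar ⊆ D.X := hEX Sstar hSstarE
  have hgen1 : ∀ c d : ℕ, c ∉ D.X → d ∉ D.X → c ≠ d → ∀ S, S ⊆ D.X →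
      insert c S ∩ insert d S = S := by
    intro c d hc hd hcd S hS
    ext a
    simp only [Finset.mem_inter, Finset.mem_insert]
    constructor
    · rintro ⟨h1 | h1, h2 | h2⟩
      · subst h1; exact absurd h2 hcd
      · subst h1; exact absurd (hS h2) hc
      · exact h1
      · exact h1
    · intro h; exact ⟨Or.inr h, Or.inr h⟩
  have hgen2 : ∀ c : ℕ, c ∉ D.X → ∀ S T, S ⊆ T → T ⊆ D.X →
      T ∩ insert c S = S ∧ insert c S ∩ T = S := by
    intro c hc S T hST hTX
    have h : T ∩ insert c S = S := by
      ext a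
      simp only [Finset.mem_inter, Finset.mem_insert]
      constructor
      · rintro ⟨h1, h2 | h2⟩
        · subst h2; exact absurd (hTX h1) hc
        · exact h2
      · intro h; exact ⟨hST h, Or.inr h⟩
    exact ⟨h, by rw [Finset.inter_comm]; exact h⟩
  have hgen3 : ∀ c : ℕ, c ∉ D.X → ∀ S T, S ⊆ D.X → T ⊆ D.X → Disjoint S T →
      insert c S ∩ insert c T = {c} := by
    intro c hc S T hS hT hd
    ext a
    simp only [Finset.mem_inter, Finset.mem_insert, Finset.mem_singleton]
    constructor
    · rintro ⟨h1 | h1, h2 | h2⟩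
      · exact h1
      · exact h1
      · exact h2
      · exact absurd (Finset.mem_inter.mpr ⟨h1, h2⟩)
          (by rw [Finset.disjoint_iff_inter_eq_empty.mp hd]; exact Finset.notMem_empty a)
    · intro h; exact ⟨Or.inl h, Or.inl h⟩
  have hgen4 : ∀ c : ℕ, c = x ∨ c = y →
      insert c Sstar ∩ Sxy = insert c (Sstar.erase sstar) ∧
      Sxy ∩ insert c Sstar = insert c (Sstar.erase sstar) := by
    intro c hcxy
    have h : insert c Sstar ∩ Sxy = insert c (Sstar.erase sstar) := by
      ext a
      rw [hSxydef]
      simp only [Finset.mem_inter, Finset.mem_insert, Finset.mem_erase]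
      constructor
      · rintro ⟨h1 | h1, h2⟩
        · exact Or.inl h1
        · rcases h2 with h2 | h2 | h2
          · subst h2; exact absurd (hSstarX h1) hxX
          · subst h2; exact absurd (hSstarX h1) hyX
          · exact Or.inr h2
      · rintro (rfl | ⟨hne, hmem⟩)
        · refine ⟨Or.inl rfl, ?_⟩
          rcases hcxy with rfl | rfl
          · exact Or.inl rfl
          · exact Or.inr (Or.inl rfl)
        · exact ⟨Or.inr hmem, Or.inr (Or.inr ⟨hne, hmem⟩)⟩
    exact ⟨h, by rw [Finset.inter_comm]; exact h⟩
  have hcard_ic : ∀ c : ℕ, c ∉ D.X → ∀ S, S ⊆ D.X → (insert c S).card = S.card + 1 := by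
    intro c hc S hS
    exact Finset.card_insert_of_notMem (fun h => hc (hS h))
  have herase_sub : Sstar.erase sstar ⊆ D.X :=
    fun a ha => hSstarX (Finset.mem_of_mem_erase ha)
  have herase_card : (Sstar.erase sstar).card = m - 1 := by
    rw [Finset.card_erase_of_mem hsstar, hcardS Sstar hSstarE]
  have hics : ∀ c : ℕ, c ∉ D.X → (insert c (Sstar.erase sstar)).card = m := by
    intro c hc
    rw [hcard_ic c hc _ herase_sub, herase_card]
    omega
  have hSxy_card : Sxy.card = k := by
    rw [hSxydef]
    have h1 : (insert y (Sstar.erase sstar)).card = m := hics y hyX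
    rw [Finset.card_insert_of_notMem, h1]
    · omega
    · simp only [Finset.mem_insert]
      push_neg
      exact ⟨hxy, fun h => hxX (herase_sub h)⟩
  have hxmemSxy : x ∈ Sxy := by rw [hSxydef]; exact Finset.mem_insert_self _ _
  have hymemSxy : y ∈ Sxy := by
    rw [hSxydef]; exact Finset.mem_insert_of_mem (Finset.mem_insert_self _ _)
  have hXsubX' : D.X ⊆ X' := by
    rw [hX'def]
    exact fun a ha => Finset.mem_insert_of_mem (Finset.mem_insert_of_mem ha)
  have hSxy_sub : Sxy ⊆ X' := by
    rw [hSxydef, hX'def]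
    intro a ha
    simp only [Finset.mem_insert] at ha ⊢
    rcases ha with h | h | h
    · exact Or.inl h
    · exact Or.inr (Or.inl h)
    · exact Or.inr (Or.inr (hXsubX' (herase_sub h) |> fun _ => herase_sub h))
  -- chain within one pattern
  have hone_chain : ∀ (o : Bool) (S : Finset ℕ), S ∈ E →
      List.Chain' (fun A A' => (A ∩ A').card = k - 1) (patOne x y Sstar Sxy o S) := by
    intro o S hS
    have hSX := hEX S hS
    by_cases hst : S = Sstar
    · subst hst
      unfold patOne
      rw [if_pos rfl]
      cases o <;>
        simp only [List.Chain', List.isChain_cons_cons, List.isChain_singleton, and_true, if_true, if_false,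
          Bool.false_eq_true] <;>
        constructor
      · rw [(hgen4 y (Or.inr rfl)).1]; exact hics y hyX
      · rw [(hgen4 x (Or.inl rfl)).2]; exact hics x hxX
      · rw [(hgen4 x (Or.inl rfl)).1]; exact hics x hxX
      · rw [(hgen4 y (Or.inr rfl)).2]; exact hics y hyX
    · unfold patOne
      rw [if_neg hst]
      cases o <;>
        simp only [List.Chain', List.isChain_cons_cons, List.isChain_singleton, and_true, if_true, if_false,
          Bool.false_eq_true]
      · rw [hgen1 y x hyX hxX (Ne.symm hxy) S hSX]; exact hcardS S hS
      · rw [hgen1 x y hxX hyX hxy S hSX]; exact hcardS S hS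
  -- chain and joints for a whole slot
  have hslot : ∀ t, t ≤ b →
      List.Chain' (fun A A' => (A ∩ A').card = k - 1) (patL x y Sstar Sxy (lst t)) ∧
      (∀ z ∈ (patL x y Sstar Sxy (lst t)).head?, (D.B (t - 1) ∩ z).card = k - 1) ∧
      (t < b → ∀ z ∈ (patL x y Sstar Sxy (lst t)).getLast?,
        (z ∩ D.B t).card = k - 1) := by
    intro t ht
    obtain ⟨hlen2, hlenm⟩ := hlst_len t ht
    have hmemt : ∀ S ∈ lst t, S ∈ E ∧ tau S = t := fun S hS => (hlst_mem t S).mp hS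
    have hBt1X : D.B (t - 1) ⊆ D.X := D.subX _ (by omega)
    have hanchL : ∀ S ∈ lst t, S ⊆ D.B (t - 1) := by
      intro S hS
      obtain ⟨hSE, htS⟩ := hmemt S hS
      rw [← htS]
      exact hsubL S hSE
    have hanchR : t < b → ∀ S ∈ lst t, S ⊆ D.B t := by
      intro hlt S hS
      obtain ⟨hSE, htS⟩ := hmemt S hS
      rw [← htS]
      exact hsubR S hSE (htS ▸ hlt)
    have hnodup : (lst t).Nodup := Finset.nodup_toList _
    rcases hl : lst t with - | ⟨S, rest1⟩
    · refine ⟨by simp [patL, List.Chain'], by simp [patL], fun _ => by simp [patL]⟩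
    rcases rest1 with - | ⟨S', rest⟩
    · -- singleton slot
      have hSmem : S ∈ lst t := by rw [hl]; exact List.mem_cons_self
      obtain ⟨hSE, htS⟩ := hmemt S hSmem
      have hSX := hEX S hSE
      refine ⟨hone_chain true S hSE, ?_, ?_⟩
      · intro z hz
        rw [show patL x y Sstar Sxy [S] = patOne x y Sstar Sxy true S from rfl,
          patOne_head?] at hz
        simp only [Option.mem_def, Option.some.injEq] at hz
        subst hz
        simp only [if_true]
        rw [(hgen2 x hxX S (D.B (t - 1)) (hanchL S hSmem) hBt1X).1]
        exact hcardS S hSE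
      · intro hlt z hz
        rw [show patL x y Sstar Sxy [S] = patOne x y Sstar Sxy true S from rfl,
          patOne_getLast?] at hz
        simp only [Option.mem_def, Option.some.injEq] at hz
        subst hz
        simp only [if_true]
        rw [(hgen2 y hyX S (D.B t) (hanchR hlt S hSmem) (D.subX t hlt)).2]
        exact hcardS S hSE
    · -- two-element slot
      have hrest : rest = [] := by
        rw [hl] at hlen2
        simp only [List.length_cons] at hlen2
        have : rest.length = 0 := by omega
        exact List.length_eq_zero_iff.mp this
      subst hrest
      have hm1' : m = 1 := by
        apply hlenm
        rw [hl]
        rfl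
      have hSmem : S ∈ lst t := by rw [hl]; exact List.mem_cons_self
      have hS'mem : S' ∈ lst t := by rw [hl]; simp
      obtain ⟨hSE, htS⟩ := hmemt S hSmem
      obtain ⟨hS'E, htS'⟩ := hmemt S' hS'mem
      have hSX := hEX S hSE
      have hS'X := hEX S' hS'E
      have hne : S ≠ S' := by
        rw [hl] at hnodup
        simp only [List.nodup_cons, List.mem_singleton] at hnodup
        exact hnodup.1
      have hdisjSS' : Disjoint S S' := hdisj' S hSE S' hS'E hne
      have hpl : patL x y Sstar Sxy [S, S']
          = patOne x y Sstar Sxy true S ++ patOne x y Sstar Sxy false S' := rfl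
      refine ⟨?_, ?_, ?_⟩
      · rw [hpl, List.Chain', List.isChain_append]
        refine ⟨hone_chain true S hSE, hone_chain false S' hS'E, ?_⟩
        intro z hz w hw
        rw [patOne_getLast?] at hz
        rw [patOne_head?] at hw
        simp only [Option.mem_def, Option.some.injEq] at hz hw
        subst hz; subst hw
        simp only [if_true, Bool.false_eq_true, if_false]
        rw [hgen3 y hyX S S' hSX hS'X hdisjSS', Finset.card_singleton]
        omega
      · intro z hz
        rw [hpl, List.head?_append, patOne_head?] at hz
        simp only [Option.some_or, Option.mem_def, Option.some.injEq] at hz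
        subst hz
        simp only [if_true]
        rw [(hgen2 x hxX S (D.B (t - 1)) (hanchL S hSmem) hBt1X).1]
        exact hcardS S hSE
      · intro hlt z hz
        rw [hpl, List.getLast?_append, patOne_getLast?] at hz
        simp only [Option.some_or, Option.mem_def, Option.some.injEq] at hz
        subst hz
        simp only [Bool.false_eq_true, if_false]
        rw [(hgen2 x hxX S' (D.B t) (hanchR hlt S' hS'mem) (D.subX t hlt)).2]
        exact hcardS S' hS'E
  -- the global list of blocks
  set g : ℕ → List (Finset ℕ) := fun i => D.B i :: patL x y Sstar Sxy (lst (i + 1))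
    with hgdef
  set LL : List (Finset ℕ) := patL x y Sstar Sxy (lst 0) ++ (List.range b).flatMap g
    with hLLdef
  -- chain property, by induction
  have hLp : ∀ n, n ≤ b →
      List.Chain' (fun A A' => (A ∩ A').card = k - 1)
        (patL x y Sstar Sxy (lst 0) ++ (List.range n).flatMap g) ∧
      (n < b → ∀ z ∈ (patL x y Sstar Sxy (lst 0) ++ (List.range n).flatMap g).getLast?,
        (z ∩ D.B n).card = k - 1) := by
    intro n
    induction n with
    | zero =>
      intro _
      simp only [List.range_zero, List.flatMap_nil, List.append_nil]
      exact ⟨(hslot 0 (by omega)).1, fun _ => (hslot 0 (by omega)).2.2 hb⟩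
    | succ n ih =>
      intro hn
      have hnb : n < b := by omega
      obtain ⟨ihc, ihl⟩ := ih (by omega)
      have hsplit : (List.range (n + 1)).flatMap g = (List.range n).flatMap g ++ g n := by
        rw [List.range_succ, List.flatMap_append]
        simp
      rw [hsplit, ← List.append_assoc]
      have hgn : g n = D.B n :: patL x y Sstar Sxy (lst (n + 1)) := rfl
      constructor
      · rw [List.Chain', List.isChain_append]
        refine ⟨ihc, ?_, ?_⟩
        · rw [hgn, List.isChain_cons]
          refine ⟨?_, (hslot (n + 1) (by omega)).1⟩
          intro z hz
          have := (hslot (n + 1) (by omega)).2.1 z hz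
          simpa using this
        · intro z hz w hw
          rw [hgn] at hw
          simp only [List.head?_cons, Option.mem_def, Option.some.injEq] at hw
          subst hw
          exact ihl hnb z hz
      · intro hlt z hz
        rw [List.getLast?_append_of_ne_nil _ (by rw [hgn]; simp)] at hz
        rw [hgn] at hz
        rcases hcase : patL x y Sstar Sxy (lst (n + 1)) with - | ⟨w, ws⟩
        · rw [hcase] at hz
          simp only [List.getLast?_singleton, Option.mem_def, Option.some.injEq] at hz
          subst hz
          exact D.singleChange n hlt
        · rw [hcase, List.getLast?_cons_cons] at hz
          exact (hslot (n + 1) (by omega)).2.2 hlt z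
            (by rw [hcase]; exact hz)
  -- membership facts
  have hmemB : ∀ i, i < b → D.B i ∈ LL := by
    intro i hi
    apply List.mem_append_right
    refine List.mem_flatMap.mpr ⟨i, List.mem_range.mpr hi, ?_⟩
    exact List.mem_cons_self
  have hmemIns : ∀ t ≤ b, ∀ A ∈ patL x y Sstar Sxy (lst t), A ∈ LL := by
    intro t ht A hA
    rcases Nat.eq_zero_or_pos t with rfl | h0
    · exact List.mem_append_left _ hA
    · apply List.mem_append_right
      refine List.mem_flatMap.mpr ⟨t - 1, List.mem_range.mpr (by omega), ?_⟩
      show A ∈ D.B (t - 1) :: patL x y Sstar Sxy (lst (t - 1 + 1))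
      have he : t - 1 + 1 = t := by omega
      rw [he]
      exact List.mem_cons_of_mem _ hA
  -- properties of all blocks
  have hxX' : x ∈ X' := by rw [hX'def]; exact Finset.mem_insert_self _ _
  have hyX' : y ∈ X' := by
    rw [hX'def]; exact Finset.mem_insert_of_mem (Finset.mem_insert_self _ _)
  have hpatprops : ∀ t, ∀ A ∈ patL x y Sstar Sxy (lst t), A.card = k ∧ A ⊆ X' := by
    intro t A hA
    obtain ⟨S, hSl, hform⟩ := patL_mem_cases x y Sstar Sxy _ A hA
    obtain ⟨hSE, -⟩ := (hlst_mem t S).mp hSl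
    have hSX := hEX S hSE
    rcases hform with rfl | rfl | rfl
    · constructor
      · rw [hcard_ic x hxX S hSX, hcardS S hSE]; omega
      · intro a ha
        rcases Finset.mem_insert.mp ha with rfl | h
        · exact hxX'
        · exact hXsubX' (hSX h)
    · constructor
      · rw [hcard_ic y hyX S hSX, hcardS S hSE]; omega
      · intro a ha
        rcases Finset.mem_insert.mp ha with rfl | h
        · exact hyX'
        · exact hXsubX' (hSX h)
    · exact ⟨hSxy_card, hSxy_sub⟩
  have hLLprops : ∀ A ∈ LL, A.card = k ∧ A ⊆ X' := by
    intro A hA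
    rcases List.mem_append.mp hA with h | h
    · exact hpatprops 0 A h
    · obtain ⟨i, hi, hgi⟩ := List.mem_flatMap.mp h
      rw [List.mem_range] at hi
      have h2 : A ∈ D.B i :: patL x y Sstar Sxy (lst (i + 1)) := hgi
      rcases List.mem_cons.mp h2 with rfl | h3
      · exact ⟨D.cardB i hi, fun a ha => hXsubX' (D.subX i hi ha)⟩
      · exact hpatprops (i + 1) A h3
  -- coverage
  have hblocksE : ∀ S ∈ E, insert x S ∈ LL ∧ insert y S ∈ LL := by
    intro S hS
    have ht := htau_le S
    have hSl : S ∈ lst (tau S) := (hlst_mem _ S).mpr ⟨hS, rfl⟩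
    obtain ⟨h1, h2⟩ := patL_mem x y Sstar Sxy (lst (tau S)) S (hlst_len (tau S) ht).1 hSl
    exact ⟨hmemIns _ ht _ h1, hmemIns _ ht _ h2⟩
  have hSxyLL : Sxy ∈ LL :=
    hmemIns _ (htau_le Sstar) _
      (patL_mem_star x y Sstar Sxy _ ((hlst_len _ (htau_le Sstar)).1)
        ((hlst_mem _ Sstar).mpr ⟨hSstarE, rfl⟩))
  have hxz : ∀ z ∈ D.X, ∃ A ∈ LL, x ∈ A ∧ z ∈ A := by
    intro z hz
    rw [← hsup] at hz
    obtain ⟨S, hSE, hzS⟩ := Finset.mem_sup.mp hz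
    exact ⟨insert x S, (hblocksE S hSE).1, Finset.mem_insert_self _ _,
      Finset.mem_insert_of_mem hzS⟩
  have hyz : ∀ z ∈ D.X, ∃ A ∈ LL, y ∈ A ∧ z ∈ A := by
    intro z hz
    rw [← hsup] at hz
    obtain ⟨S, hSE, hzS⟩ := Finset.mem_sup.mp hz
    exact ⟨insert y S, (hblocksE S hSE).2, Finset.mem_insert_self _ _,
      Finset.mem_insert_of_mem hzS⟩
  have hcov : ∀ a ∈ X', ∀ c ∈ X', a ≠ c → ∃ A ∈ LL, a ∈ A ∧ c ∈ A := by
    intro a ha c hc hac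
    rw [hX'def] at ha hc
    simp only [Finset.mem_insert] at ha hc
    rcases ha with rfl | rfl | ha <;> rcases hc with rfl | rfl | hc
    · exact absurd rfl hac
    · exact ⟨Sxy, hSxyLL, hxmemSxy, hymemSxy⟩
    · exact hxz c hc
    · exact ⟨Sxy, hSxyLL, hymemSxy, hxmemSxy⟩
    · exact absurd rfl hac
    · exact hyz c hc
    · obtain ⟨A, h1, h2, h3⟩ := hxz a ha
      exact ⟨A, h1, h3, h2⟩
    · obtain ⟨A, h1, h2, h3⟩ := hyz a ha
      exact ⟨A, h1, h3, h2⟩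
    · obtain ⟨i, hi, h1, h2⟩ := D.covers a ha c hc hac
      exact ⟨D.B i, hmemB i hi, h1, h2⟩
  -- length computation
  have hbridge : ∀ (s : Finset (Finset ℕ)) (f : Finset ℕ → ℕ),
      ∑ S ∈ s, f S = (s.toList.map f).sum := by
    intro s f
    rw [Finset.sum, ← Multiset.coe_toList s.val, Multiset.map_coe, Multiset.sum_coe]
    rfl
  have hbridge2 : ∀ (n : ℕ) (f : ℕ → ℕ),
      ∑ i ∈ Finset.range n, f i = ((List.range n).map f).sum := by
    intro n f
    rw [Finset.sum, Finset.range_val, Multiset.range, Multiset.map_coe, Multiset.sum_coe]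
  have hlenpat : ∀ t ≤ b, (patL x y Sstar Sxy (lst t)).length
      = ∑ S ∈ E.filter (fun S => tau S = t), (if S = Sstar then 3 else 2) := by
    intro t ht
    rw [hbridge]
    have hlen := (hlst_len t ht).1
    have heq : (E.filter (fun S => tau S = t)).toList = lst t := rfl
    rw [heq]
    rcases hl : lst t with - | ⟨S, - | ⟨S', rest⟩⟩
    · simp [patL]
    · show (patOne x y Sstar Sxy true S).length = _
      rw [patOne_length]
      simp
    · have hrest : rest = [] := by
        rw [hl] at hlen
        simp only [List.length_cons] at hlen
        have : rest.length = 0 := by omega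
        exact List.length_eq_zero_iff.mp this
      subst hrest
      show (patOne x y Sstar Sxy true S ++ patOne x y Sstar Sxy false S').length = _
      rw [List.length_append, patOne_length, patOne_length]
      simp
  have hLLlen : LL.length = b + (2 * r + 1) := by
    have hcomp : (fun a => (g a).length) = fun i => (patL x y Sstar Sxy (lst (i + 1))).length + 1 := by
      funext i
      show (D.B i :: patL x y Sstar Sxy (lst (i + 1))).length = _
      simp
    rw [hLLdef, List.length_append, List.length_flatMap, hcomp,
      ← hbridge2 b (fun i => (patL x y Sstar Sxy (lst (i + 1))).length + 1)]
    rw [Finset.sum_add_distrib, Finset.sum_const, smul_eq_mul, mul_one, Finset.card_range]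
    have hstep : (patL x y Sstar Sxy (lst 0)).length
        + (∑ i ∈ Finset.range b, (patL x y Sstar Sxy (lst (i + 1))).length)
        = ∑ t ∈ Finset.range (b + 1), (patL x y Sstar Sxy (lst t)).length := by
      rw [Finset.sum_range_succ']
      omega
    have hfib : ∑ t ∈ Finset.range (b + 1), (patL x y Sstar Sxy (lst t)).length
        = ∑ S ∈ E, (if S = Sstar then 3 else 2) := by
      rw [Finset.sum_congr rfl (fun t htm => hlenpat t (by
        have := Finset.mem_range.mp htm; omega))]
      exact Finset.sum_fiberwise_of_maps_to
        (fun S hS => Finset.mem_range.mpr (by have := htau_le S; omega)) _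
    have hsumE : ∑ S ∈ E, (if S = Sstar then 3 else 2) = 2 * E.card + 1 := by
      have h1 : ∀ S ∈ E, (if S = Sstar then 3 else 2) = 2 + (if S = Sstar then 1 else 0) := by
        intro S _
        split <;> rfl
      rw [Finset.sum_congr rfl h1, Finset.sum_add_distrib, Finset.sum_const, smul_eq_mul,
        mul_comm, Finset.sum_ite_eq' E Sstar (fun _ => 1), if_pos hSstarE]
    omega
  -- assemble the design
  have hchainLL : List.Chain' (fun A A' => (A ∩ A').card = k - 1) LL := (hLp b le_rfl).1
  have hNE : Nonempty (SCCD (v + 2) k LL.length) :=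
    helper_sccd_of_list (v + 2) k X' LL hX'card hLLprops hchainLL hcov
  have hidx : LL.length = b + 2 * (v / (k - 1)) + 1 := by
    rw [hLLlen, hr]
    omega
  rw [hidx] at hNE
  obtain ⟨D'⟩ := hNE
  refine ⟨D', ?_⟩
  -- arithmetic on the excess
  have hch : (v + 2).choose 2 = v.choose 2 + (2 * v + 1) := by
    have h1 : (v + 2).choose 2 = (v + 1).choose 1 + (v + 1).choose 2 :=
      Nat.choose_succ_succ (v + 1) 1
    have h2 : (v + 1).choose 2 = v.choose 1 + v.choose 2 := Nat.choose_succ_succ v 1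
    rw [h1, h2, Nat.choose_one_right, Nat.choose_one_right]
    omega
  have hvz : (v : ℤ) = (r : ℤ) * (m : ℤ) := by exact_mod_cast hvrm
  have hkz : (k : ℤ) = (m : ℤ) + 1 := by exact_mod_cast hkm
  have hmz : ((k - 1 : ℕ) : ℤ) = (m : ℤ) := rfl
  simp only [linExcess]
  rw [hch]
  rw [hmz]
  push_cast
  linear_combination -hkz - 2 * hvz
end

section
/- If there exists a tight SCCD(v,k,b) with an outer expansion set, then there exists an economical SCCD(v+2, k, b + 2v/(k−1) + 1). -/
-- ===== auxiliary machinery =====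
section Aux

def chainList {α : Type*} (Bf : ℕ → α) (ext : ℕ → List α) : ℕ → List α
  | 0 => []
  | n+1 => chainList Bf ext n ++ (Bf n :: ext (n+1))

namespace chainList
variable {α : Type*} (Bf : ℕ → α) (ext : ℕ → List α)

lemma mem_iff (a : α) (n : ℕ) :
    a ∈ chainList Bf ext n ↔ (∃ i < n, a = Bf i) ∨ ∃ j, 1 ≤ j ∧ j ≤ n ∧ a ∈ ext j := by
  induction n with
  | zero => simp [chainList]
  | succ n ih =>
    simp only [chainList, List.mem_append, List.mem_cons, ih]
    constructor
    · rintro ((⟨i, hi, rfl⟩ | ⟨j, h1, h2, h3⟩) | (rfl | h))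
      · exact Or.inl ⟨i, by omega, rfl⟩
      · exact Or.inr ⟨j, h1, by omega, h3⟩
      · exact Or.inl ⟨n, by omega, rfl⟩
      · exact Or.inr ⟨n+1, by omega, by omega, h⟩
    · rintro (⟨i, hi, rfl⟩ | ⟨j, h1, h2, h3⟩)
      · rcases Nat.lt_succ_iff_lt_or_eq.mp hi with h | rfl
        · exact Or.inl (Or.inl ⟨i, h, rfl⟩)
        · exact Or.inr (Or.inl rfl)
      · rcases Nat.lt_succ_iff_lt_or_eq.mp (Nat.lt_succ_of_le h2) with h | rfl
        · exact Or.inl (Or.inr ⟨j, h1, by omega, h3⟩)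
        · exact Or.inr (Or.inr h3)

lemma length_eq (n : ℕ) :
    (chainList Bf ext n).length = n + ∑ j ∈ Finset.range n, (ext (j+1)).length := by
  induction n with
  | zero => simp [chainList]
  | succ n ih => simp [chainList, ih, Finset.sum_range_succ]; ring

lemma head?_eq (n : ℕ) (hn : 0 < n) : (chainList Bf ext n).head? = some (Bf 0) := by
  induction n with
  | zero => omega
  | succ n ih =>
    rcases Nat.eq_zero_or_pos n with rfl | hp
    · simp [chainList]
    · rw [chainList, List.head?_append, ih hp]; rfl

lemma getLast?_succ (n : ℕ) :
    (chainList Bf ext (n+1)).getLast? = (Bf n :: ext (n+1)).getLast? := by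
  rw [chainList, List.getLast?_append]
  have : (Bf n :: ext (n+1)).getLast? = some ((Bf n :: ext (n+1)).getLast (by simp)) :=
    List.getLast?_eq_getLast _
  rw [this]; rfl

lemma chain' (R : α → α → Prop) (b : ℕ)
    (h1 : ∀ n, n < b → List.Chain' R (Bf n :: ext (n+1)))
    (h2 : ∀ n, n + 1 < b → R ((Bf n :: ext (n+1)).getLast (by simp)) (Bf (n+1))) :
    List.Chain' R (chainList Bf ext b) := by
  induction b with
  | zero => simp [chainList]; exact List.isChain_nil
  | succ n ih =>
    rw [chainList]
    refine List.IsChain.append (ih (fun m hm => h1 m (by omega)) (fun m hm => h2 m (by omega)))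
      (h1 n (by omega)) ?_
    rintro u hu v hv
    rcases Nat.eq_zero_or_pos n with rfl | hp
    · simp [chainList] at hu
    · obtain ⟨m, rfl⟩ : ∃ m, n = m + 1 := ⟨n - 1, by omega⟩
      rw [getLast?_succ] at hu
      rw [List.getLast?_eq_getLast (by simp)] at hu
      simp only [Option.mem_def, Option.some.injEq] at hu hv
      simp only [List.head?_cons, Option.some.injEq] at hv
      subst hu; subst hv
      exact h2 m (by omega)

end chainList

/-- Reverse of an SCCD. -/
def SCCD.rev {v k b : ℕ} (D : SCCD v k b) : SCCD v k b where
  X := D.X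
  B := fun i => D.B (b - 1 - i)
  cardX := D.cardX
  cardB i hi := D.cardB _ (by omega)
  subX i hi := D.subX _ (by omega)
  singleChange i hi := by
    have h := D.singleChange (b - 2 - i) (by omega)
    show (D.B (b - 1 - i) ∩ D.B (b - 1 - (i+1))).card = k - 1
    rw [show b - 1 - i = b - 2 - i + 1 by omega, show b - 1 - (i+1) = b - 2 - i by omega,
      Finset.inter_comm]
    exact h
  covers p hp q hq hpq := by
    obtain ⟨i, hi, h1, h2⟩ := D.covers p hp q hq hpq
    refine ⟨b - 1 - i, by omega, ?_, ?_⟩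
    · show p ∈ D.B (b - 1 - (b - 1 - i))
      rw [show b - 1 - (b - 1 - i) = i by omega]; exact h1
    · show q ∈ D.B (b - 1 - (b - 1 - i))
      rw [show b - 1 - (b - 1 - i) = i by omega]; exact h2

lemma SCCD.rev_B {v k b : ℕ} (D : SCCD v k b) (i : ℕ) : D.rev.B i = D.B (b - 1 - i) := rfl

lemma SCCD.rev_expansion {v k b : ℕ} (D : SCCD v k b) (E : Finset (Finset ℕ))
    (hE : D.IsExpansionSet E) : D.rev.IsExpansionSet E := by
  obtain ⟨h1, h2, h3, h4⟩ := hE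
  refine ⟨h1, ?_, h3, h4⟩
  intro S hS
  rcases h2 S hS with ⟨i, hi, hSeq⟩ | ⟨hb, hsub, hc⟩ | ⟨hb, hsub, hc⟩
  · left
    refine ⟨b - 2 - i, by omega, ?_⟩
    rw [SCCD.rev_B, SCCD.rev_B, show b - 1 - (b - 2 - i) = i + 1 by omega,
      show b - 1 - (b - 2 - i + 1) = i by omega, Finset.inter_comm]
    exact hSeq
  · right; right
    exact ⟨hb, by rw [SCCD.rev_B, show b - 1 - (b-1) = 0 by omega]; exact hsub, hc⟩
  · right; left
    exact ⟨hb, by rw [SCCD.rev_B, Nat.sub_zero]; exact hsub, hc⟩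

lemma econ_arith (v k b : ℕ) (hk : 2 ≤ k) (hdvd : (k-1) * (v/(k-1)) = v)
    (hD : TightLin v k b) : EconomicalLin (v+2) k (b + 2*(v/(k-1)) + 1) := by
  set r := v / (k - 1) with hr
  set K : ℚ := (k : ℚ) - 1 with hK
  have hK1 : (1:ℚ) ≤ K := by
    have : (2:ℚ) ≤ (k:ℚ) := by exact_mod_cast hk
    simp [hK]; linarith
  have hK0 : K ≠ 0 := by linarith
  have hch : ((v+2).choose 2 : ℚ) = (v.choose 2 : ℚ) + 2*v + 1 := by
    have : (v+2).choose 2 = v.choose 2 + 2*v + 1 := by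
      simp [Nat.choose_succ_succ, Nat.choose_one_right]; ring
    exact_mod_cast this
  have hv : (v:ℚ) = K * r := by
    have hcast : ((k-1 : ℕ) : ℚ) = K := by
      rw [hK]; push_cast [Nat.cast_sub (by omega : 1 ≤ k)]; ring
    calc (v:ℚ) = ((k-1) * r : ℕ) := by exact_mod_cast hdvd.symm
    _ = K * r := by push_cast [← hcast]; ring
  have hq : g1 (v+2) k = ((b + 2*r : ℕ) : ℚ) + 1/K := by
    unfold TightLin g1 at hD
    rw [← hK] at hD
    unfold g1
    rw [← hK]
    rw [hch]
    push_cast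
    rw [hD, hv]
    field_simp
    ring
  unfold EconomicalLin
  rw [hq]
  have h2 : ((b + 2*r : ℕ):ℚ) + 1/K = 1/K + (((b + 2*r : ℕ) : ℤ) : ℚ) := by
    push_cast; ring
  rw [h2, Int.ceil_add_intCast]
  have h1 : ⌈1/K⌉ = 1 := by
    rw [Int.ceil_eq_iff]
    constructor
    · push_cast; rw [lt_div_iff₀ (by linarith)]; linarith
    · push_cast; rw [div_le_one (by linarith)]; linarith
  rw [h1]; push_cast; ring

lemma keyfacts {v k b : ℕ} (D : SCCD v k b) (E : Finset (Finset ℕ))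
    (hE : D.IsExpansionSet E) (hne : E.Nonempty) :
    2 ≤ k ∧ (k-1) * (v/(k-1)) = v ∧
    (∀ S ∈ E, S.card = k - 1) ∧ (∀ S ∈ E, S ⊆ D.X) := by
  obtain ⟨hcard, hunch, hdisj, hsup⟩ := hE
  have hk1 : 0 < k - 1 := by
    by_contra h
    have : k - 1 = 0 := by omega
    rw [this, Nat.div_zero] at hcard
    exact absurd (Finset.card_pos.mpr hne) (by omega)
  have hk : 2 ≤ k := by omega
  have hSX : ∀ S ∈ E, S ⊆ D.X := by
    intro S hS
    rw [← hsup]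
    exact Finset.le_sup (f := id) hS
  have hcardS : ∀ S ∈ E, S.card = k - 1 := by
    intro S hS
    rcases hunch S hS with ⟨i, hi, hSeq⟩ | ⟨_, _, hc⟩ | ⟨_, _, hc⟩
    · rw [hSeq]; exact D.singleChange i hi
    · exact hc
    · exact hc
  have hdvd : (k-1) * (v/(k-1)) = v := by
    have hXcard : D.X.card = v := D.cardX
    have : D.X = E.biUnion id := by rw [← hsup, Finset.sup_eq_biUnion]
    have hsum : D.X.card = ∑ S ∈ E, S.card := by
      rw [this]
      exact Finset.card_biUnion (fun A hA B hB hAB => hdisj hA hB hAB)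
    rw [Finset.sum_congr rfl hcardS, Finset.sum_const, smul_eq_mul, hcard, hXcard] at hsum
    rw [mul_comm]
    omega
  exact ⟨hk, hdvd, hcardS, hSX⟩

end Aux
namespace Expand

variable {v k b : ℕ}

/-- first new point -/
noncomputable def nx (D : SCCD v k b) : ℕ := D.X.sup id + 1
/-- second new point -/
noncomputable def ny (D : SCCD v k b) : ℕ := D.X.sup id + 2

lemma nx_not_mem (D : SCCD v k b) : nx D ∉ D.X := by
  intro h
  have := Finset.le_sup (f := id) h
  simp only [id] at this
  unfold nx at h this
  omega

lemma ny_not_mem (D : SCCD v k b) : ny D ∉ D.X := by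
  intro h
  have := Finset.le_sup (f := id) h
  simp only [id] at this
  unfold ny at h this
  omega

lemma nx_ne_ny (D : SCCD v k b) : nx D ≠ ny D := by unfold nx ny; omega

open Classical in
/-- gap position assigned to an unchanged set -/
noncomputable def pos (D : SCCD v k b) (S : Finset ℕ) : ℕ :=
  if h : ∃ i, i + 1 < b ∧ S = D.B i ∩ D.B (i+1) then h.choose + 1
  else if S ⊆ D.B 0 then 0 else b

lemma pos_spec (D : SCCD v k b) (S : Finset ℕ) :
    (∃ i, i + 1 < b ∧ S = D.B i ∩ D.B (i+1) ∧ pos D S = i + 1) ∨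
    (pos D S = 0 ∧ S ⊆ D.B 0 ∧ (∀ i, i+1 < b → S ≠ D.B i ∩ D.B (i+1))) ∨
    (pos D S = b ∧ ¬ S ⊆ D.B 0 ∧ (∀ i, i+1 < b → S ≠ D.B i ∩ D.B (i+1))) := by
  unfold pos
  split_ifs with h1 h2
  · exact Or.inl ⟨h1.choose, h1.choose_spec.1, h1.choose_spec.2, rfl⟩
  · exact Or.inr (Or.inl ⟨rfl, h2, fun i hi heq => h1 ⟨i, hi, heq⟩⟩)
  · exact Or.inr (Or.inr ⟨rfl, h2, fun i hi heq => h1 ⟨i, hi, heq⟩⟩)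

lemma pos_le (D : SCCD v k b) (hb : 0 < b) (S : Finset ℕ) : pos D S ≤ b := by
  rcases pos_spec D S with ⟨i, hi, _, hp⟩ | ⟨hp, _⟩ | ⟨hp, _⟩ <;> omega

/-- fiber of sets assigned to gap `j` -/
noncomputable def F (D : SCCD v k b) (E : Finset (Finset ℕ)) (S0 : Finset ℕ) (j : ℕ) :
    Finset (Finset ℕ) := (E.erase S0).filter (fun S => pos D S = j)

/-- blocks inserted at gap `j` -/
noncomputable def ext (D : SCCD v k b) (E : Finset (Finset ℕ)) (S0 : Finset ℕ) (j : ℕ) :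
    List (Finset ℕ) :=
  (F D E S0 j).toList.flatMap (fun S => [insert (nx D) S, insert (ny D) S])

/-- a chosen element of `S0` -/
noncomputable def zel (S0 : Finset ℕ) : ℕ :=
  if h : S0.Nonempty then h.choose else 0

lemma zel_mem {S0 : Finset ℕ} (h : S0.Nonempty) : zel S0 ∈ S0 := by
  unfold zel
  rw [dif_pos h]
  exact h.choose_spec

/-- the block containing both new points -/
noncomputable def ZB (D : SCCD v k b) (S0 : Finset ℕ) : Finset ℕ :=
  insert (nx D) (insert (ny D) (S0.erase (zel S0)))

/-- the initial segment of the new block list -/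
noncomputable def front (D : SCCD v k b) (E : Finset (Finset ℕ)) (S0 : Finset ℕ) :
    List (Finset ℕ) :=
  ext D E S0 0 ++ [insert (ny D) S0, ZB D S0, insert (nx D) S0]

/-- the full new block list -/
noncomputable def LL (D : SCCD v k b) (E : Finset (Finset ℕ)) (S0 : Finset ℕ) :
    List (Finset ℕ) :=
  front D E S0 ++ chainList D.B (ext D E S0) b

lemma mem_ext_iff (D : SCCD v k b) (E : Finset (Finset ℕ)) (S0 : Finset ℕ) (j : ℕ)
    (C : Finset ℕ) :
    C ∈ ext D E S0 j ↔ ∃ S ∈ E.erase S0, pos D S = j ∧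
      (C = insert (nx D) S ∨ C = insert (ny D) S) := by
  unfold ext F
  simp only [List.mem_flatMap, Finset.mem_toList, Finset.mem_filter, List.mem_cons,
    List.mem_singleton, List.not_mem_nil, or_false]
  constructor
  · rintro ⟨S, ⟨hS, hp⟩, h⟩
    exact ⟨S, hS, hp, h⟩
  · rintro ⟨S, hS, hp, h⟩
    exact ⟨S, ⟨hS, hp⟩, h⟩

lemma length_ext (D : SCCD v k b) (E : Finset (Finset ℕ)) (S0 : Finset ℕ) (j : ℕ) :
    (ext D E S0 j).length = 2 * (F D E S0 j).card := by
  unfold ext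
  rw [List.length_flatMap]
  have : List.map (fun S => [insert (nx D) S, insert (ny D) S].length)
      (F D E S0 j).toList = List.replicate (F D E S0 j).toList.length 2 := by
    rw [List.eq_replicate_iff]
    constructor
    · simp
    · intro a ha
      simp only [List.mem_map] at ha
      obtain ⟨S, _, rfl⟩ := ha
      rfl
  rw [this, List.sum_replicate, smul_eq_mul, Finset.length_toList]
  ring

end Expand
lemma expand {v k b : ℕ} (D : SCCD v k b) (E : Finset (Finset ℕ)) (S0 : Finset ℕ)
    (hEx : D.IsExpansionSet E) (hS0E : S0 ∈ E) (hU0 : D.IsU0 S0) :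
    Nonempty (SCCD (v+2) k (b + 2*(v/(k-1)) + 1)) := by
  classical
  obtain ⟨hk, hdvd, hcardS, hSX⟩ := keyfacts D E hEx ⟨S0, hS0E⟩
  obtain ⟨hcard, hunch, hdisj, hsup⟩ := hEx
  obtain ⟨hb, hS0B, hS0card⟩ := hU0
  have hxX := Expand.nx_not_mem D
  have hyX := Expand.ny_not_mem D
  have hxy := Expand.nx_ne_ny D
  set x := Expand.nx D with hxdef
  set y := Expand.ny D with hydef
  set r := v / (k-1) with hrdef
  have hr1 : 1 ≤ r := by
    have := Finset.card_pos.mpr ⟨S0, hS0E⟩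
    omega
  have hmemE : ∀ S ∈ E.erase S0, S ∈ E := fun S hS => Finset.mem_of_mem_erase hS
  have hS0X : S0 ⊆ D.X := hSX S0 hS0E
  -- trichotomy for gap positions
  have hcases : ∀ S ∈ E.erase S0,
      (1 ≤ Expand.pos D S ∧ Expand.pos D S < b ∧
        S = D.B (Expand.pos D S - 1) ∩ D.B (Expand.pos D S)) ∨
      (Expand.pos D S = 0 ∧ S ⊆ D.B 0 ∧
        (∀ i, i+1 < b → S ≠ D.B i ∩ D.B (i+1))) ∨
      (Expand.pos D S = b ∧ S ⊆ D.B (b-1) ∧ ¬ S ⊆ D.B 0 ∧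
        (∀ i, i+1 < b → S ≠ D.B i ∩ D.B (i+1))) := by
    intro S hS
    rcases Expand.pos_spec D S with ⟨i, hi, heq, hp⟩ | ⟨hp, hsub, hni⟩ | ⟨hp, hnsub, hni⟩
    · left
      rw [hp]
      simp only [Nat.add_sub_cancel]
      exact ⟨by omega, by omega, heq⟩
    · exact Or.inr (Or.inl ⟨hp, hsub, hni⟩)
    · right; right
      refine ⟨hp, ?_, hnsub, hni⟩
      rcases hunch S (hmemE S hS) with ⟨i, hi, heq⟩ | ⟨_, hsub, _⟩ | ⟨_, hsub, _⟩
      · exact absurd heq (hni i hi)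
      · exact absurd hsub hnsub
      · exact hsub
  -- each fiber has at most one element
  have hFone : ∀ j, (Expand.F D E S0 j).card ≤ 1 := by
    intro j
    rw [Finset.card_le_one]
    intro S hSF T hTF
    by_contra hST
    obtain ⟨hSe, hSp⟩ := Finset.mem_filter.mp hSF
    obtain ⟨hTe, hTp⟩ := Finset.mem_filter.mp hTF
    have hSE := hmemE S hSe
    have hTE := hmemE T hTe
    have hdST : Disjoint S T := hdisj hSE hTE hST
    have hcS := hcardS S hSE
    have hcT := hcardS T hTE
    rcases hcases S hSe with ⟨ha1, ha2, ha3⟩ | ⟨ha1, ha2, ha3⟩ | ⟨ha1, ha2, ha3, ha4⟩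
    · -- inner : T must be inner too with same gap
      rcases hcases T hTe with ⟨hb1, hb2, hb3⟩ | ⟨hb1, _⟩ | ⟨hb1, _⟩
      · rw [hSp, hTp] at *
        exact hST (ha3.trans hb3.symm)
      · omega
      · omega
    · -- gap 0 : S, T, S0 all inside B 0
      have hb2 : T ⊆ D.B 0 := by
        rcases hcases T hTe with ⟨hb1, hb2, _⟩ | ⟨_, hb2, _⟩ | ⟨hb1, _, hb3, _⟩
        · omega
        · exact hb2
        · omega
      have hdSS0 : Disjoint S S0 := hdisj hSE hS0E (Finset.ne_of_mem_erase hSe)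
      have hdTS0 : Disjoint T S0 := hdisj hTE hS0E (Finset.ne_of_mem_erase hTe)
      have hsub3 : S ∪ T ∪ S0 ⊆ D.B 0 :=
        Finset.union_subset (Finset.union_subset ha2 hb2) hS0B
      have hcard3 : (S ∪ T ∪ S0).card = 3 * (k-1) := by
        rw [Finset.card_union_of_disjoint (Finset.disjoint_union_left.mpr ⟨hdSS0, hdTS0⟩),
          Finset.card_union_of_disjoint hdST, hcS, hcT, hS0card]
        ring
      have := Finset.card_le_card hsub3
      rw [hcard3, D.cardB 0 hb] at this
      omega
    · -- gap b
      obtain ⟨hb1, hb2, hb3, hb4⟩ : Expand.pos D T = b ∧ T ⊆ D.B (b-1) ∧ ¬ T ⊆ D.B 0 ∧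
          (∀ i, i+1 < b → T ≠ D.B i ∩ D.B (i+1)) := by
        rcases hcases T hTe with ⟨hc1, hc2, _⟩ | ⟨hc1, _⟩ | h
        · omega
        · omega
        · exact h
      rcases Nat.lt_or_ge b 2 with hbs | hbs
      · -- b = 1 : contradiction, S ⊆ B 0
        exact ha3 (by rwa [show b - 1 = 0 by omega] at ha2)
      · -- b ≥ 2
        have hsub2 : S ∪ T ⊆ D.B (b-1) := Finset.union_subset ha2 hb2
        have hcard2 : (S ∪ T).card = 2 * (k-1) := by
          rw [Finset.card_union_of_disjoint hdST, hcS, hcT]; ring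
        have hle := Finset.card_le_card hsub2
        rw [hcard2, D.cardB (b-1) (by omega)] at hle
        have hk2 : k = 2 := by omega
        have hSTeq : S ∪ T = D.B (b-1) := by
          apply Finset.eq_of_subset_of_card_le hsub2
          rw [hcard2, D.cardB (b-1) (by omega)]
          omega
        have hU : (D.B (b-2) ∩ D.B (b-1)).card = k - 1 := by
          have := D.singleChange (b-2) (by omega)
          rwa [show b - 2 + 1 = b - 1 by omega] at this
        obtain ⟨u, hu⟩ : (D.B (b-2) ∩ D.B (b-1)).Nonempty :=
          Finset.card_pos.mp (by omega)
        have hUsub : D.B (b-2) ∩ D.B (b-1) ⊆ S ∪ T := by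
          rw [hSTeq]; exact Finset.inter_subset_right
        have hUsing : D.B (b-2) ∩ D.B (b-1) = {u} := by
          apply Finset.eq_singleton_iff_unique_mem.mpr
          refine ⟨hu, fun w hw => ?_⟩
          have h1 := Finset.card_eq_one.mp (by omega : (D.B (b-2) ∩ D.B (b-1)).card = 1)
          obtain ⟨a, haa⟩ := h1
          rw [haa] at hu hw
          simp at hu hw
          omega
        rcases Finset.mem_union.mp (hUsub hu) with h | h
        · have hSu : S = {u} := by
            obtain ⟨a, haa⟩ := Finset.card_eq_one.mp (by omega : S.card = 1)
            rw [haa] at h ⊢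
            simp at h
            rw [h]
          exact ha4 (b-2) (by omega)
            (by rw [show b - 2 + 1 = b - 1 by omega, hUsing, hSu])
        · have hTu : T = {u} := by
            obtain ⟨a, haa⟩ := Finset.card_eq_one.mp (by omega : T.card = 1)
            rw [haa] at h ⊢
            simp at h
            rw [h]
          exact hb4 (b-2) (by omega)
            (by rw [show b - 2 + 1 = b - 1 by omega, hUsing, hTu])
  -- description of ext lists
  have hextc : ∀ j, Expand.ext D E S0 j = [] ∨
      ∃ S ∈ E.erase S0, Expand.pos D S = j ∧ S.card = k - 1 ∧ S ⊆ D.X ∧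
        Expand.ext D E S0 j = [insert x S, insert y S] := by
    intro j
    rcases Finset.eq_empty_or_nonempty (Expand.F D E S0 j) with he | hne2
    · left
      unfold Expand.ext
      rw [he]
      simp
    · right
      have h1 : (Expand.F D E S0 j).card = 1 :=
        le_antisymm (hFone j) (Finset.card_pos.mpr hne2)
      obtain ⟨S, hFeq⟩ := Finset.card_eq_one.mp h1
      have hSF : S ∈ Expand.F D E S0 j := by rw [hFeq]; exact Finset.mem_singleton_self S
      obtain ⟨hSe, hSp⟩ := Finset.mem_filter.mp hSF
      refine ⟨S, hSe, hSp, hcardS S (hmemE S hSe), hSX S (hmemE S hSe), ?_⟩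
      unfold Expand.ext
      rw [hFeq, Finset.toList_singleton]
      rfl
  -- intersection helpers
  have hxny : ∀ S : Finset ℕ, S ⊆ D.X → x ∉ insert y S := by
    intro S hsub h
    rcases Finset.mem_insert.mp h with h | h
    · exact hxy h
    · exact hxX (hsub h)
  have hint1 : ∀ (S T : Finset ℕ) (a : ℕ), a ∉ T → S ⊆ T → T ∩ insert a S = S := by
    intro S T a ha hsub
    rw [Finset.inter_comm, Finset.insert_inter_of_notMem ha,
      Finset.inter_eq_left.mpr hsub]
  have hint2 : ∀ S : Finset ℕ, S ⊆ D.X → insert x S ∩ insert y S = S := by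
    intro S hsub
    rw [Finset.insert_inter_of_notMem (hxny S hsub),
      Finset.inter_eq_left.mpr (Finset.subset_insert y S)]
  have hinsins : ∀ (a : ℕ) (S T : Finset ℕ),
      insert a S ∩ insert a T = insert a (S ∩ T) := by
    intro a S T
    ext u
    simp only [Finset.mem_inter, Finset.mem_insert]
    tauto
  -- the chain relation
  set R : Finset ℕ → Finset ℕ → Prop := fun A C => (A ∩ C).card = k - 1 with hRdef
  -- facts about an ext member at gap n+1
  have hsubBn : ∀ n, n < b → ∀ S ∈ E.erase S0, Expand.pos D S = n + 1 →
      S ⊆ D.B n ∧ (n + 1 < b → S = D.B n ∩ D.B (n+1)) := by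
    intro n hn S hSe hp
    rcases hcases S hSe with ⟨h1, h2, h3⟩ | ⟨h1, _⟩ | ⟨h1, h2, _⟩
    · rw [hp] at h3 h2
      simp only [Nat.add_sub_cancel] at h3
      exact ⟨h3 ▸ Finset.inter_subset_left, fun _ => h3⟩
    · omega
    · have hnb : n + 1 = b := by omega
      refine ⟨?_, fun h => by omega⟩
      rwa [show b - 1 = n by omega] at h2
  -- chain hypothesis 1
  have hchain1 : ∀ n, n < b → List.Chain' R (D.B n :: Expand.ext D E S0 (n+1)) := by
    intro n hn
    rcases hextc (n+1) with he | ⟨S, hSe, hp, hc, hsub, he⟩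
    · rw [he]
      exact List.isChain_singleton _
    · rw [he]
      have hSBn := (hsubBn n hn S hSe hp).1
      refine List.isChain_cons_cons.mpr ⟨?_, List.isChain_cons_cons.mpr ⟨?_, List.isChain_singleton _⟩⟩
      · show (D.B n ∩ insert x S).card = k - 1
        rw [hint1 S (D.B n) x (fun h => hxX (D.subX n hn h)) hSBn, hc]
      · show (insert x S ∩ insert y S).card = k - 1
        rw [hint2 S hsub, hc]
  -- chain hypothesis 2
  have hchain2 : ∀ n, n + 1 < b →
      R ((D.B n :: Expand.ext D E S0 (n+1)).getLast (by simp)) (D.B (n+1)) := by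
    intro n hn
    rcases hextc (n+1) with he | ⟨S, hSe, hp, hc, hsub, he⟩
    · rw [he]
      show (D.B n ∩ D.B (n+1)).card = k - 1
      exact D.singleChange n hn
    · rw [he]
      show ((D.B n :: [insert x S, insert y S]).getLast (by simp) ∩ D.B (n+1)).card = k - 1
      have hlast : (D.B n :: [insert x S, insert y S]).getLast (by simp) = insert y S := rfl
      rw [hlast]
      have hSeq := (hsubBn n (by omega) S hSe hp).2 hn
      have hSBn1 : S ⊆ D.B (n+1) := hSeq ▸ Finset.inter_subset_right
      rw [Finset.inter_comm, hint1 S (D.B (n+1)) y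
        (fun h => hyX (D.subX (n+1) hn h)) hSBn1, hc]
  have hcore : List.Chain' R (chainList D.B (Expand.ext D E S0) b) :=
    chainList.chain' _ _ R b hchain1 hchain2
  -- front facts
  have hS0ne : S0.Nonempty := Finset.card_pos.mp (by omega)
  have hz := Expand.zel_mem hS0ne
  set z := Expand.zel S0 with hzdef
  have herz : (S0.erase z).card = k - 2 := by
    rw [Finset.card_erase_of_mem hz, hS0card]
    omega
  have herzsub : S0.erase z ⊆ D.X := (Finset.erase_subset z S0).trans hS0X
  have hyerz : y ∉ S0.erase z := fun h => hyX (herzsub h)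
  have hxerz : x ∉ insert y (S0.erase z) := hxny _ herzsub
  -- chain for the front triple
  have hRyZ : R (insert y S0) (Expand.ZB D S0) := by
    show (insert y S0 ∩ Expand.ZB D S0).card = k - 1
    unfold Expand.ZB
    rw [← hxdef, ← hydef, ← hzdef]
    rw [Finset.inter_comm, Finset.insert_inter_of_notMem (hxny S0 hS0X), hinsins,
      Finset.inter_eq_left.mpr (Finset.erase_subset z S0)]
    rw [Finset.card_insert_of_notMem hyerz, herz]
    omega
  have hRZx : R (Expand.ZB D S0) (insert x S0) := by
    show (Expand.ZB D S0 ∩ insert x S0).card = k - 1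
    unfold Expand.ZB
    rw [← hxdef, ← hydef, ← hzdef]
    rw [hinsins, Finset.insert_inter_of_notMem (fun h => hyX (hS0X h)),
      Finset.inter_eq_left.mpr (Finset.erase_subset z S0)]
    rw [Finset.card_insert_of_notMem (fun h => hxX (herzsub h)), herz]
    omega
  have htriple : List.Chain' R [insert y S0, Expand.ZB D S0, insert x S0] :=
    List.isChain_cons_cons.mpr ⟨hRyZ, List.isChain_cons_cons.mpr ⟨hRZx, List.isChain_singleton _⟩⟩
  -- chain for the front
  have hfrontchain : List.Chain' R (Expand.front D E S0) := by
    unfold Expand.front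
    rw [← hxdef, ← hydef]
    rcases hextc 0 with he | ⟨S, hSe, hp, hc, hsub, he⟩
    · rw [he]
      simpa using htriple
    · rw [he]
      refine List.IsChain.append ?_ htriple ?_
      · exact List.isChain_cons_cons.mpr ⟨by
          show (insert x S ∩ insert y S).card = k - 1
          rw [hint2 S hsub, hc], List.isChain_singleton _⟩
      · rintro u hu w hw
        simp only [List.getLast?_cons_cons, List.getLast?_singleton, Option.mem_def,
          Option.some.injEq, List.head?_cons] at hu hw
        subst hu; subst hw
        -- link : insert y S ∩ insert y S0, here k = 2
        have hSB0 : S ⊆ D.B 0 := by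
          rcases hcases S hSe with ⟨h1, _⟩ | ⟨_, h2, _⟩ | ⟨h1, _⟩
          · omega
          · exact h2
          · omega
        have hdSS0 : Disjoint S S0 :=
          hdisj (hmemE S hSe) hS0E (Finset.ne_of_mem_erase hSe)
        have hk2 : k = 2 := by
          have hsub2 : S ∪ S0 ⊆ D.B 0 := Finset.union_subset hSB0 hS0B
          have := Finset.card_le_card hsub2
          rw [Finset.card_union_of_disjoint hdSS0, hc, hS0card, D.cardB 0 hb] at this
          omega
        show (insert y S ∩ insert y S0).card = k - 1
        rw [hinsins, Finset.disjoint_iff_inter_eq_empty.mp hdSS0]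
        simp [hk2]
  -- full chain
  have hLLchain : List.Chain' R (Expand.LL D E S0) := by
    unfold Expand.LL
    refine List.IsChain.append hfrontchain hcore ?_
    rintro u hu w hw
    rw [chainList.head?_eq D.B _ b hb] at hw
    simp only [Option.mem_def, Option.some.injEq] at hw
    subst hw
    unfold Expand.front at hu
    rw [List.getLast?_append] at hu
    simp only [List.getLast?_cons_cons, List.getLast?_singleton, Option.or_some, Option.some_or,
      Option.mem_def, Option.some.injEq] at hu
    subst hu
    show (insert x S0 ∩ D.B 0).card = k - 1
    rw [Finset.inter_comm, hint1 S0 (D.B 0) x (fun h => hxX (D.subX 0 hb h)) hS0B, hS0card]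
  -- length of LL
  have hsumF : ∑ j ∈ Finset.range (b+1), (Expand.F D E S0 j).card = r - 1 := by
    have := Finset.card_eq_sum_card_fiberwise
      (f := Expand.pos D) (s := E.erase S0) (t := Finset.range (b+1))
      (fun S _ => Finset.mem_range.mpr (by
        have := Expand.pos_le D hb S
        omega))
    rw [Finset.card_erase_of_mem hS0E, hcard] at this
    unfold Expand.F
    rw [← this]
  have hlen : (Expand.LL D E S0).length = b + 2 * r + 1 := by
    unfold Expand.LL Expand.front
    rw [List.length_append, List.length_append, chainList.length_eq]
    simp only [List.length_cons, List.length_singleton, List.length_nil]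
    have h1 : ∀ j, (Expand.ext D E S0 j).length = 2 * (Expand.F D E S0 j).card :=
      Expand.length_ext D E S0
    rw [h1]
    have h2 : ∑ j ∈ Finset.range b, (Expand.ext D E S0 (j+1)).length =
        ∑ j ∈ Finset.range b, 2 * (Expand.F D E S0 (j+1)).card := by
      exact Finset.sum_congr rfl (fun j _ => h1 (j+1))
    rw [h2]
    have h3 : 2 * (Expand.F D E S0 0).card +
        ∑ j ∈ Finset.range b, 2 * (Expand.F D E S0 (j+1)).card = 2 * (r - 1) := by
      rw [← Finset.mul_sum, ← hsumF, Finset.sum_range_succ']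
      ring
    omega
  -- membership: find index of a block
  have hfind : ∀ C ∈ Expand.LL D E S0, ∃ i, i < b + 2*r + 1 ∧
      (Expand.LL D E S0).getD i ∅ = C := by
    intro C hC
    obtain ⟨⟨n, hn⟩, hg⟩ := List.mem_iff_get.mp hC
    refine ⟨n, by omega, ?_⟩
    rw [List.getD_eq_getElem _ _ (by omega)]
    exact hg
  -- membership of specific blocks
  have hextsubLL : ∀ j, j ≤ b → ∀ C ∈ Expand.ext D E S0 j, C ∈ Expand.LL D E S0 := by
    intro j hj C hC
    unfold Expand.LL
    rw [List.mem_append]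
    rcases Nat.eq_zero_or_pos j with rfl | hjpos
    · left
      unfold Expand.front
      rw [List.mem_append]
      exact Or.inl hC
    · right
      rw [chainList.mem_iff]
      exact Or.inr ⟨j, hjpos, hj, hC⟩
  have hblockmem : ∀ i, i < b → D.B i ∈ Expand.LL D E S0 := by
    intro i hi
    unfold Expand.LL
    rw [List.mem_append, chainList.mem_iff]
    exact Or.inr (Or.inl ⟨i, hi, rfl⟩)
  have htriplemem : ∀ C ∈ [insert y S0, Expand.ZB D S0, insert x S0],
      C ∈ Expand.LL D E S0 := by
    intro C hC
    unfold Expand.LL Expand.front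
    rw [List.mem_append, List.mem_append]
    exact Or.inl (Or.inr hC)
  have hinsmem : ∀ S ∈ E, insert x S ∈ Expand.LL D E S0 ∧ insert y S ∈ Expand.LL D E S0 := by
    intro S hS
    by_cases hSS0 : S = S0
    · subst hSS0
      exact ⟨htriplemem _ (by simp), htriplemem _ (by simp)⟩
    · have hSe : S ∈ E.erase S0 := Finset.mem_erase.mpr ⟨hSS0, hS⟩
      have hSF : S ∈ Expand.F D E S0 (Expand.pos D S) :=
        Finset.mem_filter.mpr ⟨hSe, rfl⟩
      have hx' : insert x S ∈ Expand.ext D E S0 (Expand.pos D S) := by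
        rw [Expand.mem_ext_iff, ← hxdef, ← hydef]
        exact ⟨S, hSe, rfl, Or.inl rfl⟩
      have hy' : insert y S ∈ Expand.ext D E S0 (Expand.pos D S) := by
        rw [Expand.mem_ext_iff, ← hxdef, ← hydef]
        exact ⟨S, hSe, rfl, Or.inr rfl⟩
      exact ⟨hextsubLL _ (Expand.pos_le D hb S) _ hx',
        hextsubLL _ (Expand.pos_le D hb S) _ hy'⟩
  -- cards and subsets of all members
  set X' : Finset ℕ := insert x (insert y D.X) with hX'def
  have hmemLL : ∀ C ∈ Expand.LL D E S0, C.card = k ∧ C ⊆ X' := by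
    intro C hC
    have hXsub : D.X ⊆ X' := (Finset.subset_insert y D.X).trans (Finset.subset_insert x _)
    have hins : ∀ S : Finset ℕ, S ⊆ D.X → S.card = k - 1 →
        (insert x S).card = k ∧ insert x S ⊆ X' ∧ (insert y S).card = k ∧ insert y S ⊆ X' := by
      intro S hsub hc
      refine ⟨?_, ?_, ?_, ?_⟩
      · rw [Finset.card_insert_of_notMem (fun h => hxX (hsub h)), hc]; omega
      · exact Finset.insert_subset (Finset.mem_insert_self x _)
          (hsub.trans hXsub)
      · rw [Finset.card_insert_of_notMem (fun h => hyX (hsub h)), hc]; omega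
      · exact Finset.insert_subset
          (Finset.mem_insert_of_mem (Finset.mem_insert_self y _))
          (hsub.trans hXsub)
    unfold Expand.LL Expand.front at hC
    rw [List.mem_append, List.mem_append] at hC
    rcases hC with (hC | hC) | hC
    · rw [Expand.mem_ext_iff, ← hxdef, ← hydef] at hC
      obtain ⟨S, hSe, _, hor⟩ := hC
      have h := hins S (hSX S (hmemE S hSe)) (hcardS S (hmemE S hSe))
      rcases hor with rfl | rfl
      · exact ⟨h.1, h.2.1⟩
      · exact ⟨h.2.2.1, h.2.2.2⟩
    · have h0 := hins S0 hS0X hS0card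
      simp only [List.mem_cons, List.mem_singleton, List.not_mem_nil, or_false] at hC
      rcases hC with rfl | rfl | rfl
      · exact ⟨h0.2.2.1, h0.2.2.2⟩
      · -- ZB
        constructor
        · unfold Expand.ZB
          rw [← hxdef, ← hydef, ← hzdef]
          rw [Finset.card_insert_of_notMem hxerz, Finset.card_insert_of_notMem hyerz, herz]
          omega
        · unfold Expand.ZB
          rw [← hxdef, ← hydef, ← hzdef]
          refine Finset.insert_subset (Finset.mem_insert_self x _) ?_
          refine Finset.insert_subset
            (Finset.mem_insert_of_mem (Finset.mem_insert_self y _)) ?_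
          exact herzsub.trans hXsub
      · exact ⟨h0.1, h0.2.1⟩
    · rw [chainList.mem_iff] at hC
      rcases hC with ⟨i, hi, rfl⟩ | ⟨j, hj1, hj2, hC⟩
      · exact ⟨D.cardB i hi, (D.subX i hi).trans hXsub⟩
      · rw [Expand.mem_ext_iff, ← hxdef, ← hydef] at hC
        obtain ⟨S, hSe, _, hor⟩ := hC
        have h := hins S (hSX S (hmemE S hSe)) (hcardS S (hmemE S hSe))
        rcases hor with rfl | rfl
        · exact ⟨h.1, h.2.1⟩
        · exact ⟨h.2.2.1, h.2.2.2⟩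
  -- existence of a common block for every pair
  have hcover2 : ∀ p ∈ X', ∀ q ∈ X', p ≠ q →
      ∃ C ∈ Expand.LL D E S0, p ∈ C ∧ q ∈ C := by
    have hXY : ∀ p ∈ D.X, ∃ S ∈ E, p ∈ S := by
      intro p hp
      rw [← hsup] at hp
      obtain ⟨S, hS, hpS⟩ := Finset.mem_sup.mp hp
      exact ⟨S, hS, hpS⟩
    have hxq : ∀ q ∈ D.X, ∃ C ∈ Expand.LL D E S0, x ∈ C ∧ q ∈ C := by
      intro q hq
      obtain ⟨S, hS, hqS⟩ := hXY q hq
      exact ⟨insert x S, (hinsmem S hS).1, Finset.mem_insert_self x S,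
        Finset.mem_insert_of_mem hqS⟩
    have hyq : ∀ q ∈ D.X, ∃ C ∈ Expand.LL D E S0, y ∈ C ∧ q ∈ C := by
      intro q hq
      obtain ⟨S, hS, hqS⟩ := hXY q hq
      exact ⟨insert y S, (hinsmem S hS).2, Finset.mem_insert_self y S,
        Finset.mem_insert_of_mem hqS⟩
    have hxymem : ∃ C ∈ Expand.LL D E S0, x ∈ C ∧ y ∈ C := by
      refine ⟨Expand.ZB D S0, htriplemem _ (by simp), ?_, ?_⟩
      · unfold Expand.ZB; rw [← hxdef]
        exact Finset.mem_insert_self x _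
      · unfold Expand.ZB; rw [← hxdef, ← hydef]
        exact Finset.mem_insert_of_mem (Finset.mem_insert_self y _)
    intro p hp q hq hpq
    rw [hX'def] at hp hq
    simp only [Finset.mem_insert] at hp hq
    rcases hp with rfl | rfl | hp
    · rcases hq with rfl | rfl | hq
      · exact absurd rfl hpq
      · exact hxymem
      · exact hxq q hq
    · rcases hq with rfl | rfl | hq
      · obtain ⟨C, h1, h2, h3⟩ := hxymem
        exact ⟨C, h1, h3, h2⟩
      · exact absurd rfl hpq
      · exact hyq q hq
    · rcases hq with rfl | rfl | hq
      · obtain ⟨C, h1, h2, h3⟩ := hxq p hp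
        exact ⟨C, h1, h3, h2⟩
      · obtain ⟨C, h1, h2, h3⟩ := hyq p hp
        exact ⟨C, h1, h3, h2⟩
      · obtain ⟨i, hi, h1, h2⟩ := D.covers p hp q hq hpq
        exact ⟨D.B i, hblockmem i hi, h1, h2⟩
  -- assemble the new design
  refine ⟨⟨X', fun i => (Expand.LL D E S0).getD i ∅, ?_, ?_, ?_, ?_, ?_⟩⟩
  · -- cardX
    show (insert x (insert y D.X)).card = v + 2
    rw [Finset.card_insert_of_notMem (by
        intro h
        rcases Finset.mem_insert.mp h with h | h
        · exact hxy h
        · exact hxX h),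
      Finset.card_insert_of_notMem hyX, D.cardX]
  · -- cardB
    intro i hi
    have hi' : i < (Expand.LL D E S0).length := by omega
    show ((Expand.LL D E S0).getD i ∅).card = k
    rw [List.getD_eq_getElem _ _ hi']
    exact (hmemLL _ (List.getElem_mem hi')).1
  · -- subX
    intro i hi
    have hi' : i < (Expand.LL D E S0).length := by omega
    show (Expand.LL D E S0).getD i ∅ ⊆ X'
    rw [List.getD_eq_getElem _ _ hi']
    exact (hmemLL _ (List.getElem_mem hi')).2
  · -- singleChange
    intro i hi
    have hi' : i + 1 < (Expand.LL D E S0).length := by omega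
    show ((Expand.LL D E S0).getD i ∅ ∩ (Expand.LL D E S0).getD (i+1) ∅).card = k - 1
    rw [List.getD_eq_getElem _ _ (by omega), List.getD_eq_getElem _ _ hi']
    have := List.isChain_iff_getElem.mp hLLchain i (by omega)
    simpa using this
  · -- covers
    intro p hp q hq hpq
    obtain ⟨C, hC, h1, h2⟩ := hcover2 p hp q hq hpq
    obtain ⟨i, hi, hgd⟩ := hfind C hC
    refine ⟨i, hi, ?_, ?_⟩
    · show p ∈ (Expand.LL D E S0).getD i ∅
      rw [hgd]; exact h1
    · show q ∈ (Expand.LL D E S0).getD i ∅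
      rw [hgd]; exact h2
/-- From a tight `SCCD(v,k,b)` with an outer expansion set, one
obtains an economical `SCCD(v+2, k, b + 2v/(k−1) + 1)`. -/
theorem stmt9 (v k b : ℕ) (D : SCCD v k b) (hD : TightLin v k b)
    (E : Finset (Finset ℕ)) (hE : D.IsOuterExpansionSet E) :
    Nonempty (SCCD (v + 2) k (b + 2 * (v / (k - 1)) + 1)) ∧
      EconomicalLin (v + 2) k (b + 2 * (v / (k - 1)) + 1) := by
  obtain ⟨hexp, houter⟩ := hE
  have hne : E.Nonempty := by
    rcases houter with ⟨S, hS, _⟩ | ⟨S, hS, _⟩ <;> exact ⟨S, hS⟩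
  obtain ⟨hk, hdvd, -, -⟩ := keyfacts D E hexp hne
  constructor
  · rcases houter with ⟨S, hS, hU0⟩ | ⟨S, hS, hUb⟩
    · exact expand D E S hexp hS hU0
    · have hexp' := D.rev_expansion E hexp
      have hU0' : D.rev.IsU0 S := by
        obtain ⟨hb, hsub, hc⟩ := hUb
        refine ⟨hb, ?_, hc⟩
        rw [SCCD.rev_B, Nat.sub_zero]
        exact hsub
      exact expand D.rev E S hexp' hS hU0'
  · exact econ_arith v k b hk hdvd hD
end

section
/- For all integers c ≥ 1 and k ≥ 2, there exists a tight CSCCD(2c(k−1)+1, k, c²(2k−2)+c). -/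
namespace Stmt14Construction

open Finset

/-- Base block `r` of the construction (block size `m+1`). -/
def P (m : ℕ) : ℕ → Finset ℕ
  | 0 => Finset.range (m+1)
  | r+1 => Finset.Icc 1 m ∪ {1+(r+1+1)*m}

/-- The blocks of the circular design on `ℤ/v` (as residues in `ℕ`). -/
def Bl (c m v i : ℕ) : Finset ℕ := (P m (i % c)).image (fun t => (t + i / c) % v)

lemma mem_P0 {m a : ℕ} : a ∈ P m 0 ↔ a < m + 1 := by simp [P]

lemma mem_P {m r a : ℕ} (hr : r ≠ 0) :
    a ∈ P m r ↔ (1 ≤ a ∧ a ≤ m) ∨ a = 1+(r+1)*m := by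
  obtain ⟨r', rfl⟩ : ∃ r', r = r' + 1 := ⟨r - 1, by omega⟩
  simp [P]
  exact Or.comm

lemma card_P (m r : ℕ) (hm : 1 ≤ m) : (P m r).card = m + 1 := by
  match r with
  | 0 => simp [P]
  | r+1 =>
    show (Finset.Icc 1 m ∪ {1+(r+1+1)*m}).card = m + 1
    rw [Finset.card_union_of_disjoint, Nat.card_Icc, card_singleton]
    · omega
    · have h2 : 2 * m ≤ (r+1+1) * m := Nat.mul_le_mul_right m (by omega)
      simp only [Finset.disjoint_singleton_right, mem_Icc]
      omega

lemma P_subset (c m v r : ℕ) (hm : 1 ≤ m) (hc : 1 ≤ c) (hv : v = 2*(c*m)+1)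
    (hr : r < c) : P m r ⊆ Finset.range v := by
  intro a ha
  have hmc : m ≤ c * m := Nat.le_mul_of_pos_left m (by omega)
  rw [mem_range]
  rcases Nat.eq_zero_or_pos r with h0 | h0
  · subst h0; rw [mem_P0] at ha; omega
  · rw [mem_P (by omega)] at ha
    have h2 : (r+1) * m ≤ c * m := Nat.mul_le_mul_right m (by omega)
    omega

lemma injOn_shift (v q : ℕ) : Set.InjOn (fun t => (t + q) % v) (Finset.range v) := by
  intro a ha b hb h
  simp only [coe_range, Set.mem_Iio] at ha hb
  have h2 : a ≡ b [MOD v] := Nat.ModEq.add_right_cancel' q h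
  rwa [Nat.ModEq, Nat.mod_eq_of_lt ha, Nat.mod_eq_of_lt hb] at h2

lemma inter01 (m : ℕ) : P m 0 ∩ P m 1 = Finset.Icc 1 m := by
  ext a
  show a ∈ Finset.range (m+1) ∩ (Finset.Icc 1 m ∪ {1+(0+1+1)*m}) ↔ _
  simp only [mem_inter, mem_range, mem_union, mem_Icc, mem_singleton]
  omega

lemma interSucc (m r : ℕ) (hm : 1 ≤ m) (hr : 1 ≤ r) :
    P m r ∩ P m (r+1) = Finset.Icc 1 m := by
  have e1 : 2 * m ≤ (r+1) * m := Nat.mul_le_mul_right m (by omega)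
  have e2 : (r+1+1) * m = (r+1) * m + m := by ring
  ext a
  rw [mem_inter, mem_P (by omega), mem_P (by omega), mem_Icc]
  omega

lemma interWrap (m c : ℕ) (hm : 1 ≤ m) (hc : 1 ≤ c) :
    P m (c-1) ∩ Finset.Icc 1 (m+1) = Finset.Icc 1 m := by
  rcases Nat.eq_or_lt_of_le hc with h1 | h1
  · rw [show c - 1 = 0 by omega]
    ext a
    rw [mem_inter, mem_P0, mem_Icc, mem_Icc]
    omega
  · have e0 : (c-1+1) * m = c * m := by congr 1; omega
    have e1 : 2 * m ≤ c * m := Nat.mul_le_mul_right m (by omega)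
    ext a
    rw [mem_inter, mem_P (by omega), mem_Icc, mem_Icc]
    omega

lemma Icc_subset_range (c m v : ℕ) (hm : 1 ≤ m) (hc : 1 ≤ c) (hv : v = 2*(c*m)+1) :
    Finset.Icc 1 (m+1) ⊆ Finset.range v := by
  have h : m ≤ c * m := Nat.le_mul_of_pos_left m (by omega)
  intro a ha
  rw [mem_Icc] at ha
  rw [mem_range]
  omega

lemma card_inter_image (c m v q : ℕ) (s t : Finset ℕ)
    (hs : s ⊆ Finset.range v) (ht : t ⊆ Finset.range v) :
    ((s.image (fun t => (t + q) % v)) ∩ (t.image (fun t => (t + q) % v))).card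
      = (s ∩ t).card := by
  have hsub : (↑s ∪ ↑t : Set ℕ) ⊆ (Finset.range v : Set ℕ) := by
    rw [← Finset.coe_union]
    exact Finset.coe_subset.mpr (Finset.union_subset hs ht)
  rw [← Finset.image_inter_of_injOn _ _ ((injOn_shift v q).mono hsub)]
  exact Finset.card_image_of_injOn <| (injOn_shift v q).mono <| by
    refine subset_trans ?_ hsub
    rw [← Finset.coe_union]
    exact Finset.coe_subset.mpr Finset.inter_subset_union

/-- Cardinality of the intersection at a wrap-around transition. -/
lemma wrap_card (c m v q : ℕ) (hm : 1 ≤ m) (hc : 1 ≤ c) (hv : v = 2*(c*m)+1) :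
    ((P m (c-1)).image (fun t => (t + q) % v) ∩
      (Finset.Icc 1 (m+1)).image (fun t => (t + q) % v)).card = m := by
  rw [card_inter_image c m v q _ _ (P_subset c m v (c-1) hm hc hv (by omega))
    (Icc_subset_range c m v hm hc hv), interWrap m c hm hc, Nat.card_Icc]
  omega

/-- Cardinality of the intersection at an inner transition. -/
lemma inner_card (c m v q r : ℕ) (hm : 1 ≤ m) (hc : 1 ≤ c) (hv : v = 2*(c*m)+1)
    (hr : r + 1 < c) :
    ((P m r).image (fun t => (t + q) % v) ∩
      (P m (r+1)).image (fun t => (t + q) % v)).card = m := by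
  rw [card_inter_image c m v q _ _ (P_subset c m v r hm hc hv (by omega))
    (P_subset c m v (r+1) hm hc hv (by omega))]
  rcases Nat.eq_zero_or_pos r with h0 | h0
  · rw [h0, inter01, Nat.card_Icc]; omega
  · rw [interSucc m r hm h0, Nat.card_Icc]; omega

/-- Shifting the first base block by one more equals shifting `Icc 1 (m+1)`. -/
lemma shift_one (m v q : ℕ) :
    (P m 0).image (fun t => (t + (q+1)) % v) =
      (Finset.Icc 1 (m+1)).image (fun t => (t + q) % v) := by
  have h : Finset.Icc 1 (m+1) = (Finset.range (m+1)).image (· + 1) := by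
    ext a
    simp only [mem_Icc, mem_image, mem_range]
    constructor
    · intro ha; exact ⟨a - 1, by omega, by omega⟩
    · rintro ⟨t, ht, rfl⟩; omega
  rw [h, Finset.image_image]
  show (Finset.range (m+1)).image _ = _
  apply Finset.image_congr
  intro t _
  simp only [Function.comp_apply]
  ring_nf

/-- `B 0` equals `Icc 1 (m+1)` shifted by `v - 1`. -/
lemma B0_eq (c m v : ℕ) (hm : 1 ≤ m) (hc : 1 ≤ c) (hv : v = 2*(c*m)+1) :
    Bl c m v 0 = (Finset.Icc 1 (m+1)).image (fun t => (t + (v-1)) % v) := by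
  have hmv : m + 1 < v := by
    have h : m ≤ c * m := Nat.le_mul_of_pos_left m (by omega)
    omega
  unfold Bl
  rw [Nat.zero_mod, Nat.zero_div]
  ext a
  simp only [mem_image, mem_P0, mem_Icc, Nat.add_zero]
  constructor
  · rintro ⟨t, ht, rfl⟩
    refine ⟨t + 1, by omega, ?_⟩
    rw [show t + 1 + (v - 1) = t + v by omega, Nat.add_mod_right, Nat.mod_eq_of_lt (by omega)]
  · rintro ⟨t, ht, rfl⟩
    refine ⟨t - 1, by omega, ?_⟩
    rw [show t + (v - 1) = (t - 1) + v by omega, Nat.add_mod_right,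
      Nat.mod_eq_of_lt (by omega)]

/-- Decomposition `d = m*r + e` with `r < c`, `1 ≤ e ≤ m`. -/
lemma exists_re (m c d : ℕ) (h1 : 1 ≤ d) (h2 : d ≤ c*m) :
    ∃ r e, r < c ∧ 1 ≤ e ∧ e ≤ m ∧ d = m*r + e := by
  induction c with
  | zero => simp at h2; omega
  | succ n ih =>
    have e1 : (n+1)*m = n*m + m := by ring
    have e2 : m*n = n*m := by ring
    by_cases h : d ≤ n*m
    · obtain ⟨r, e, h3, h4, h5, h6⟩ := ih h
      exact ⟨r, e, by omega, h4, h5, h6⟩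
    · exact ⟨n, d - m*n, Nat.lt_succ_self n, by omega, by omega, by omega⟩

lemma Bl_decomp (c m v q r : ℕ) (hc : 0 < c) (hr : r < c) :
    Bl c m v (c*q + r) = (P m r).image (fun t => (t + q) % v) := by
  unfold Bl
  rw [Nat.mul_add_mod, Nat.mod_eq_of_lt hr, Nat.mul_add_div hc, Nat.div_eq_of_lt hr,
    Nat.add_zero]

/-- The pair `{a, (a+d) % v}` is covered by some block. -/
lemma cover_pair (c m v : ℕ) (hm : 1 ≤ m) (hc : 1 ≤ c) (hv : v = 2*(c*m)+1)
    (a t d : ℕ) (ha : a < v) (hd1 : 1 ≤ d) (hd2 : d ≤ c*m) (hat : (a + d) % v = t) :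
    ∃ i, i < c * v ∧ a ∈ Bl c m v i ∧ t ∈ Bl c m v i := by
  obtain ⟨r, e, hrc, he1, hem, hde⟩ := exists_re m c d hd1 hd2
  have hv0 : 0 < v := by omega
  rcases Nat.eq_zero_or_pos r with hr0 | hr0
  · -- difference class 0 : use block `[a, a+m]`, index c*a
    subst hr0
    refine ⟨c * a + 0, ?_, ?_, ?_⟩
    · have h1 : c * (a+1) = c * a + c := by ring
      have h2 : c * (a+1) ≤ c * v := Nat.mul_le_mul_left c (by omega)
      omega
    · rw [Bl_decomp c m v a 0 (by omega) (by omega)]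
      exact Finset.mem_image.mpr ⟨0, mem_P0.mpr (by omega), by
        rw [Nat.zero_add, Nat.mod_eq_of_lt ha]⟩
    · rw [Bl_decomp c m v a 0 (by omega) (by omega)]
      refine Finset.mem_image.mpr ⟨d, mem_P0.mpr (by omega), ?_⟩
      rwa [Nat.add_comm]
  · -- difference class r ≥ 1
    set j := m + 1 - e with hj
    set q := (a + (v - j)) % v with hq
    have hqv : q < v := Nat.mod_lt _ hv0
    have hjv : j < v := by
      have h : m ≤ c * m := Nat.le_mul_of_pos_left m (by omega)
      omega
    refine ⟨c * q + r, ?_, ?_, ?_⟩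
    · have h1 : c * q ≤ c * (v-1) := Nat.mul_le_mul_left c (by omega)
      have h2 : c * (v-1) + c = c * v := by
        have e3 : c * v = c * ((v-1)+1) := by rw [show (v-1)+1 = v by omega]
        have e4 : c * ((v-1)+1) = c * (v-1) + c := by ring
        omega
      omega
    · rw [Bl_decomp c m v q r (by omega) hrc]
      refine Finset.mem_image.mpr ⟨j, (mem_P (by omega)).mpr (Or.inl (by omega)), ?_⟩
      rw [hq, Nat.add_mod_mod, show j + (a + (v - j)) = a + v by omega,
        Nat.add_mod_right, Nat.mod_eq_of_lt ha]
    · rw [Bl_decomp c m v q r (by omega) hrc]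
      refine Finset.mem_image.mpr ⟨1+(r+1)*m, (mem_P (by omega)).mpr (Or.inr rfl), ?_⟩
      have hX : 1 + (r+1)*m = d + j := by
        have h : (r+1)*m = m*r + m := by ring
        omega
      rw [hq, Nat.add_mod_mod, show 1+(r+1)*m + (a + (v - j)) = (a + d) + v by omega,
        Nat.add_mod_right, hat]

end Stmt14Construction


open Stmt14Construction Finset in
theorem stmt14pre (c k : ℕ) (hc : 1 ≤ c) (hk : 2 ≤ k) :
    ∃ _D : CSCCD (2 * c * (k - 1) + 1) k (c ^ 2 * (2 * k - 2) + c),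
      TightCirc (2 * c * (k - 1) + 1) k (c ^ 2 * (2 * k - 2) + c) := by
  obtain ⟨m, rfl⟩ : ∃ m, k = m + 1 := ⟨k - 1, by omega⟩
  have hm : 1 ≤ m := by omega
  rw [show 2 * c * (m + 1 - 1) + 1 = 2*(c*m)+1 by rw [Nat.add_sub_cancel]; ring,
    show c ^ 2 * (2 * (m+1) - 2) + c = c * (2*(c*m)+1) by
      rw [show 2*(m+1)-2 = 2*m by omega]; ring]
  set v : ℕ := 2*(c*m)+1 with hv
  have hv0 : 0 < v := by omega
  have hc0 : 0 < c := hc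
  have hmv : m + 1 < v := by
    have h : m ≤ c * m := Nat.le_mul_of_pos_left m hc0
    omega
  refine ⟨⟨⟨Finset.range v, Bl c m v, Finset.card_range v, ?_, ?_, ?_, ?_⟩, ?_⟩, ?_⟩
  · -- cardB
    intro i _
    unfold Bl
    rw [Finset.card_image_of_injOn ((injOn_shift v (i/c)).mono
        (Finset.coe_subset.mpr (P_subset c m v (i % c) hm hc hv (Nat.mod_lt i hc0)))),
      card_P m (i % c) hm]
  · -- subX
    intro i _ a ha
    obtain ⟨t, _, rfl⟩ := Finset.mem_image.mp ha
    exact Finset.mem_range.mpr (Nat.mod_lt _ hv0)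
  · -- singleChange
    intro i hi
    obtain ⟨q, r, hrc, rfl⟩ : ∃ q r, r < c ∧ i = c * q + r :=
      ⟨i / c, i % c, Nat.mod_lt i hc0, (Nat.div_add_mod i c).symm⟩
    have e1 : Bl c m v (c * q + r) = (P m r).image (fun t => (t + q) % v) :=
      Bl_decomp c m v q r hc0 hrc
    by_cases hlt : r + 1 < c
    · have key : c * q + r + 1 = c * q + (r + 1) := by omega
      have e2 : Bl c m v (c * q + r + 1) = (P m (r+1)).image (fun t => (t + q) % v) := by
        rw [key, Bl_decomp c m v q (r+1) hc0 hlt]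
      rw [e1, e2, inner_card c m v q r hm hc hv hlt]
      omega
    · have hr1 : r = c - 1 := by omega
      have key : c * q + r + 1 = c * (q + 1) := by
        have e3 : c * (q + 1) = c * q + c := by ring
        omega
      have e2 : Bl c m v (c * q + r + 1) = (P m 0).image (fun t => (t + (q+1)) % v) := by
        rw [key]
        unfold Bl
        rw [Nat.mul_mod_right, Nat.mul_div_cancel_left _ hc0]
      rw [e1, e2, shift_one, hr1, wrap_card c m v q hm hc hv]
      omega
  · -- covers
    intro x hx y hy hxy
    rw [Finset.mem_range] at hx hy
    rcases Nat.lt_or_ge x y with hlt | hge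
    · by_cases hdle : y - x ≤ c * m
      · exact cover_pair c m v hm hc hv x y (y-x) hx (by omega) hdle
          (by rw [show x + (y-x) = y by omega, Nat.mod_eq_of_lt hy])
      · obtain ⟨i, hi, h1, h2⟩ := cover_pair c m v hm hc hv y x (v - (y-x)) hy
          (by omega) (by omega)
          (by rw [show y + (v - (y-x)) = x + v by omega, Nat.add_mod_right,
            Nat.mod_eq_of_lt hx])
        exact ⟨i, hi, h2, h1⟩
    · have hlt : y < x := by omega
      by_cases hdle : x - y ≤ c * m
      · obtain ⟨i, hi, h1, h2⟩ := cover_pair c m v hm hc hv y x (x-y) hy (by omega) hdle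
          (by rw [show y + (x-y) = x by omega, Nat.mod_eq_of_lt hx])
        exact ⟨i, hi, h2, h1⟩
      · exact cover_pair c m v hm hc hv x y (v - (x-y)) hx (by omega) (by omega)
          (by rw [show x + (v - (x-y)) = y + v by omega, Nat.add_mod_right,
            Nat.mod_eq_of_lt hy])
  · -- circ
    intro _
    have key : c * v - 1 = c * (v - 1) + (c - 1) := by
      have e3 : c * v = c * ((v-1)+1) := by rw [show (v-1)+1 = v by omega]
      have e4 : c * ((v-1)+1) = c * (v-1) + c := by ring
      omega
    have e2 : Bl c m v (c * v - 1) = (P m (c-1)).image (fun t => (t + (v-1)) % v) := by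
      rw [key, Bl_decomp c m v (v-1) (c-1) hc0 (by omega)]
    show (Bl c m v (c * v - 1) ∩ Bl c m v 0).card = m + 1 - 1
    rw [e2, B0_eq c m v hm hc hv, wrap_card c m v (v-1) hm hc hv]
    omega
  · -- tightness
    show ((c * v : ℕ) : ℚ) = g2 v (m+1)
    have hch : v.choose 2 = (c * v) * m := by
      rw [Nat.choose_two_right, show v - 1 = 2*(c*m) by omega,
        show v * (2*(c*m)) = 2 * (c * v * m) by ring,
        Nat.mul_div_cancel_left _ (by norm_num : 0 < 2)]
    have hmne : ((m:ℚ)) ≠ 0 := Nat.cast_ne_zero.mpr (by omega)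
    rw [g2, hch]
    push_cast
    rw [show ((m:ℚ) + 1) - 1 = (m:ℚ) by ring, eq_div_iff hmne]


/-- For all `c ≥ 1` and `k ≥ 2` there exists a tight
`CSCCD(2c(k−1)+1, k, c²(2k−2)+c)`. -/
theorem stmt14 (c k : ℕ) (hc : 1 ≤ c) (hk : 2 ≤ k) :
    ∃ _D : CSCCD (2 * c * (k - 1) + 1) k (c ^ 2 * (2 * k - 2) + c),
      TightCirc (2 * c * (k - 1) + 1) k (c ^ 2 * (2 * k - 2) + c) := by
  exact stmt14pre c k hc hk
end
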